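/- The type B_∞ = ∀X ∀Y {(X → Y), (Y → X) → [(X → Y) ∧ (Y → X)]} is an infinite I-type, and Λ(B_∞) = { T_{i,j} : (i,j) ∈ ℕ² } where T_{i,j} = λx λy ⟨λu [(x)(y)]^i (x)u, λu [(y)(x)]^j (y)u⟩. -/

import Mathlib

set_option maxHeartbeats 1000000


/-- Untyped λ-terms in de Bruijn representation. -/
inductive Trm : Type
  | var : ℕ → Trm
  | app : Trm → Trm → Trm
  | lam : Trm → Trm
  deriving DecidableEq

namespace Trm

/-- The set of free variables of a term (as de Bruijn indices). -/
def fv : Trm → Set ℕ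
  | var n => {n}
  | app u v => fv u ∪ fv v
  | lam u => {n | n + 1 ∈ fv u}

/-- A term is closed if it has no free variables. -/
def Closed (t : Trm) : Prop := fv t = ∅

/-- λI-terms: abstraction is allowed only on variables occurring free in the body. -/
inductive IsLI : Trm → Prop
  | var (n : ℕ) : IsLI (var n)
  | app {u v : Trm} : IsLI u → IsLI v → IsLI (app u v)
  | lam {u : Trm} : IsLI u → 0 ∈ fv u → IsLI (lam u)

/-- Lifting of free variables ≥ d. -/
def lift (d : ℕ) : Trm → Trm
  | var n => if n < d then var n else var (n + 1)
  | app u v => app (lift d u) (lift d v)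
  | lam u => lam (lift (d + 1) u)

def liftTimes (k : ℕ) (t : Trm) : Trm := (lift 0)^[k] t

/-- Capture-avoiding substitution of the k-th free variable. -/
def subst : Trm → ℕ → Trm → Trm
  | var n, k, v => if n < k then var n else if n = k then liftTimes k v else var (n - 1)
  | app a b, k, v => app (subst a k v) (subst b k v)
  | lam a, k, v => lam (subst a (k + 1) v)

end Trm

/-- One step of β-reduction. -/
inductive Beta : Trm → Trm → Prop
  | beta {u v : Trm} : Beta (.app (.lam u) v) (u.subst 0 v)
  | appL {u u' v : Trm} : Beta u u' → Beta (.app u v) (.app u' v)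
  | appR {u v v' : Trm} : Beta v v' → Beta (.app u v) (.app u v')
  | lam {u u' : Trm} : Beta u u' → Beta (.lam u) (.lam u')

/-- One step of η-reduction: λx (u)x → u when x ∉ Fv(u). -/
inductive Eta : Trm → Trm → Prop
  | eta (u : Trm) : Eta (.lam (.app (u.lift 0) (.var 0))) u
  | appL {u u' v : Trm} : Eta u u' → Eta (.app u v) (.app u' v)
  | appR {u v v' : Trm} : Eta v v' → Eta (.app u v) (.app u v')
  | lam {u u' : Trm} : Eta u u' → Eta (.lam u) (.lam u')

/-- β-reduction (reflexive-transitive closure). -/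
def BetaStar : Trm → Trm → Prop := Relation.ReflTransGen Beta

/-- βη-reduction (reflexive-transitive closure of the union of β and η). -/
def BetaEtaStar : Trm → Trm → Prop := Relation.ReflTransGen (fun a b => Beta a b ∨ Eta a b)

/-- η-reduction (reflexive-transitive closure). -/
def EtaStar : Trm → Trm → Prop := Relation.ReflTransGen Eta

/-- A term is β-normal iff it contains no β-redex. -/
def BetaNormal (t : Trm) : Prop := ∀ u, ¬ Beta t u

/-- A term is βη-normal iff it contains neither a β-redex nor an η-redex. -/
def BetaEtaNormal (t : Trm) : Prop := ∀ u, ¬ Beta t u ∧ ¬ Eta t u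

/-- A term is strongly normalizable iff every β-reduction sequence from it is finite. -/
def StronglyNormalizable (t : Trm) : Prop :=
  ¬ ∃ f : ℕ → Trm, f 0 = t ∧ ∀ n, Beta (f n) (f (n + 1))

/-- Types of system F in de Bruijn representation. -/
inductive Ty : Type
  | var : ℕ → Ty
  | arr : Ty → Ty → Ty
  | all : Ty → Ty
  deriving DecidableEq

namespace Ty

/-- Free type variables. -/
def tfv : Ty → Set ℕ
  | var n => {n}
  | arr A B => tfv A ∪ tfv B
  | all A => {n | n + 1 ∈ tfv A}

/-- Lifting of free type variables ≥ d. -/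
def tlift (d : ℕ) : Ty → Ty
  | var n => if n < d then var n else var (n + 1)
  | arr A B => arr (tlift d A) (tlift d B)
  | all A => all (tlift (d + 1) A)

def tliftTimes (k : ℕ) (A : Ty) : Ty := (tlift 0)^[k] A

/-- Substitution of the k-th free type variable. -/
def tsubst : Ty → ℕ → Ty → Ty
  | var n, k, G => if n < k then var n else if n = k then tliftTimes k G else var (n - 1)
  | arr A B, k, G => arr (tsubst A k G) (tsubst B k G)
  | all A, k, G => all (tsubst A (k + 1) G)

/-- Proper types: in every subtype ∀X E, the variable X occurs free in E. -/
def Proper : Ty → Prop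
  | var _ => True
  | arr A B => Proper A ∧ Proper B
  | all A => Proper A ∧ 0 ∈ tfv A

/-- Closed types. -/
def ClosedTy (A : Ty) : Prop := tfv A = ∅

end Ty

/-- Typing judgments of system F (restricted to proper types:
the rule (∀e) requires X free in A and instantiates at proper types only). -/
inductive Typing : List Ty → Trm → Ty → Prop
  | ax {Γ : List Ty} {n : ℕ} {A : Ty} :
      Γ[n]? = some A → (∀ B ∈ Γ, B.Proper) → Typing Γ (.var n) A
  | arrI {Γ : List Ty} {A B : Ty} {t : Trm} :
      A.Proper → Typing (A :: Γ) t B → Typing Γ (.lam t) (.arr A B)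
  | arrE {Γ : List Ty} {A B : Ty} {u v : Trm} :
      Typing Γ u (.arr A B) → Typing Γ v A → Typing Γ (.app u v) B
  | allI {Γ : List Ty} {A : Ty} {t : Trm} :
      0 ∈ Ty.tfv A → Typing (Γ.map (Ty.tlift 0)) t A → Typing Γ t (.all A)
  | allE {Γ : List Ty} {A : Ty} {t : Trm} (G : Ty) :
      G.Proper → 0 ∈ Ty.tfv A → Typing Γ t (.all A) → Typing Γ t (A.tsubst 0 G)

/-- A closed type D is an I-type iff every closed β-normal term of type D is a λI-term. -/
def IType (D : Ty) : Prop :=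
  Ty.ClosedTy D ∧ ∀ t : Trm, BetaNormal t → Trm.Closed t → Typing [] t D → Trm.IsLI t

/-- Λ(D): the set of closed βη-normal terms of type D. -/
def Lam (D : Ty) : Set Trm :=
  {t | BetaEtaNormal t ∧ Trm.Closed t ∧ Typing [] t D}

/-- A₁,...,Aₙ → C. -/
def arrList : List Ty → Ty → Ty
  | [], C => C
  | A :: As, C => .arr A (arrList As C)

/-- The n-ary conjunction A₁ ∧ ... ∧ Aₙ = ∀X {(A₁,...,Aₙ → X) → X} with X fresh. -/
def conjN (As : List Ty) : Ty :=
  .all (.arr (arrList (As.map (Ty.tlift 0)) (.var 0)) (.var 0))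

def allN : ℕ → Ty → Ty
  | 0, A => A
  | k + 1, A => .all (allN k A)

/-- Iterated application (t)u₁...uₙ. -/
def apps : Trm → List Trm → Trm
  | h, [] => h
  | h, t :: ts => apps (.app h t) ts

/-- The tuple ⟨t₁,...,tₙ⟩ = λx (x)t₁...tₙ with x fresh. -/
def tuple (ts : List Trm) : Trm := .lam (apps (.var 0) (ts.map (Trm.lift 0)))

def lamN : ℕ → Trm → Trm
  | 0, t => t
  | k + 1, t => .lam (lamN k t)

/-- B_∞ = ∀X ∀Y {(X → Y), (Y → X) → [(X → Y) ∧ (Y → X)]} (inside, X = var 1, Y = var 0). -/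
def Binf : Ty :=
  allN 2 (arrList [Ty.arr (.var 1) (.var 0), Ty.arr (.var 0) (.var 1)]
    (conjN [Ty.arr (.var 1) (.var 0), Ty.arr (.var 0) (.var 1)]))

/-- Body (x)((y)(...((z)u)...)) with n blocks (x)(y), then (z)u; x, y, z are de
Bruijn indices of the variables inside the abstraction λu. -/
def chainBody (x y z : ℕ) : ℕ → Trm
  | 0 => .app (.var z) (.var 0)
  | n + 1 => .app (.var x) (.app (.var y) (chainBody x y z n))

/-- λu [(x)(y)]ⁿ (z)u, in βη-normal form: for n = 0 it is the variable z itself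
(η-collapse of λu (z)u); indices x, y, z are taken outside the abstraction. -/
def chain (x y z : ℕ) : ℕ → Trm
  | 0 => .var z
  | n + 1 => .lam (chainBody (x + 1) (y + 1) (z + 1) (n + 1))

/-- T_{i,j} = λx λy ⟨λu [(x)(y)]^i (x)u, λu [(y)(x)]^j (y)u⟩ (with x = var 1, y = var 0). -/
def Tij (i j : ℕ) : Trm :=
  .lam (.lam (tuple [chain 1 0 1 i, chain 0 1 0 j]))

namespace Trm

/-! ### Renamings and simultaneous substitution -/

def upR (r : ℕ → ℕ) : ℕ → ℕ
  | 0 => 0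
  | n + 1 => r n + 1

def rename (r : ℕ → ℕ) : Trm → Trm
  | var n => var (r n)
  | app u v => app (rename r u) (rename r v)
  | lam u => lam (rename (upR r) u)

def upS (σ : ℕ → Trm) : ℕ → Trm
  | 0 => var 0
  | n + 1 => rename Nat.succ (σ n)

def ssub (σ : ℕ → Trm) : Trm → Trm
  | var n => σ n
  | app u v => app (ssub σ u) (ssub σ v)
  | lam u => lam (ssub (upS σ) u)

@[simp] lemma rename_var (r : ℕ → ℕ) (n : ℕ) : rename r (var n) = var (r n) := rfl
@[simp] lemma rename_app (r : ℕ → ℕ) (u v : Trm) :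
    rename r (app u v) = app (rename r u) (rename r v) := rfl
@[simp] lemma rename_lam (r : ℕ → ℕ) (u : Trm) :
    rename r (lam u) = lam (rename (upR r) u) := rfl
@[simp] lemma ssub_var (σ : ℕ → Trm) (n : ℕ) : ssub σ (var n) = σ n := rfl
@[simp] lemma ssub_app (σ : ℕ → Trm) (u v : Trm) :
    ssub σ (app u v) = app (ssub σ u) (ssub σ v) := rfl
@[simp] lemma ssub_lam (σ : ℕ → Trm) (u : Trm) :
    ssub σ (lam u) = lam (ssub (upS σ) u) := rfl
@[simp] lemma upR_zero (r : ℕ → ℕ) : upR r 0 = 0 := rfl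
@[simp] lemma upR_succ (r : ℕ → ℕ) (n : ℕ) : upR r (n + 1) = r n + 1 := rfl
@[simp] lemma upS_zero (σ : ℕ → Trm) : upS σ 0 = var 0 := rfl
@[simp] lemma upS_succ (σ : ℕ → Trm) (n : ℕ) : upS σ (n + 1) = rename Nat.succ (σ n) := rfl

lemma rename_rename (r s : ℕ → ℕ) (t : Trm) :
    rename r (rename s t) = rename (r ∘ s) t := by
  induction t generalizing r s with
  | var n => rfl
  | app u v ihu ihv => simp [ihu, ihv]
  | lam u ih =>
    have h : upR r ∘ upR s = upR (r ∘ s) := by funext n; cases n <;> rfl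
    simp only [rename_lam, ih, h]

lemma rename_id (t : Trm) : rename (fun n => n) t = t := by
  induction t with
  | var n => rfl
  | app u v ihu ihv => simp [ihu, ihv]
  | lam u ih =>
    have h : upR (fun n => n) = fun n => n := by funext n; cases n <;> rfl
    simp only [rename_lam, h, ih]

lemma ssub_rename (σ : ℕ → Trm) (r : ℕ → ℕ) (t : Trm) :
    ssub σ (rename r t) = ssub (σ ∘ r) t := by
  induction t generalizing σ r with
  | var n => rfl
  | app u v ihu ihv => simp [ihu, ihv]
  | lam u ih =>
    have h : upS σ ∘ upR r = upS (σ ∘ r) := by funext n; cases n <;> rfl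
    simp only [rename_lam, ssub_lam, ih, h]

lemma rename_ssub (r : ℕ → ℕ) (σ : ℕ → Trm) (t : Trm) :
    rename r (ssub σ t) = ssub (fun n => rename r (σ n)) t := by
  induction t generalizing σ r with
  | var n => rfl
  | app u v ihu ihv => simp [ihu, ihv]
  | lam u ih =>
    have h : (fun n => rename (upR r) (upS σ n)) = upS (fun n => rename r (σ n)) := by
      funext n
      cases n with
      | zero => rfl
      | succ n =>
        simp only [upS_succ, rename_rename]
        congr 1
    simp only [ssub_lam, rename_lam, ih, h]

lemma ssub_ssub (σ τ : ℕ → Trm) (t : Trm) :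
    ssub σ (ssub τ t) = ssub (fun n => ssub σ (τ n)) t := by
  induction t generalizing σ τ with
  | var n => rfl
  | app u v ihu ihv => simp [ihu, ihv]
  | lam u ih =>
    have h : (fun n => ssub (upS σ) (upS τ n)) = upS (fun n => ssub σ (τ n)) := by
      funext n
      cases n with
      | zero => rfl
      | succ n => simp only [upS_succ, ssub_rename, rename_ssub]; rfl
    simp only [ssub_lam, ih, h]

@[simp] lemma ssub_id (t : Trm) : ssub var t = t := by
  induction t with
  | var n => rfl
  | app u v ihu ihv => simp [ihu, ihv]
  | lam u ih =>
    simp only [ssub_lam]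
    rw [show upS var = var by funext n; cases n <;> rfl, ih]

/-! ### fv lemmas -/

@[simp] lemma fv_var (n : ℕ) : fv (var n) = {n} := rfl
@[simp] lemma fv_app (u v : Trm) : fv (app u v) = fv u ∪ fv v := rfl
@[simp] lemma mem_fv_lam {n : ℕ} {u : Trm} : n ∈ fv (lam u) ↔ n + 1 ∈ fv u := Iff.rfl

lemma mem_fv_rename {r : ℕ → ℕ} {t : Trm} {n : ℕ} :
    n ∈ fv (rename r t) ↔ ∃ m ∈ fv t, r m = n := by
  induction t generalizing r n with
  | var k =>
    simp only [rename_var, fv_var, Set.mem_singleton_iff]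
    constructor
    · rintro rfl; exact ⟨k, rfl, rfl⟩
    · rintro ⟨m, rfl, rfl⟩; rfl
  | app u v ihu ihv =>
    simp only [rename_app, fv_app, Set.mem_union, ihu, ihv]
    constructor
    · rintro (⟨m, hm, rfl⟩ | ⟨m, hm, rfl⟩)
      · exact ⟨m, Or.inl hm, rfl⟩
      · exact ⟨m, Or.inr hm, rfl⟩
    · rintro ⟨m, hm | hm, rfl⟩
      · exact Or.inl ⟨m, hm, rfl⟩
      · exact Or.inr ⟨m, hm, rfl⟩
  | lam u ih =>
    simp only [rename_lam, mem_fv_lam, ih]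
    constructor
    · rintro ⟨m, hm, hr⟩
      cases m with
      | zero => simp [upR] at hr
      | succ m =>
        refine ⟨m, hm, ?_⟩
        simp only [upR_succ] at hr
        omega
    · rintro ⟨m, hm, rfl⟩
      exact ⟨m + 1, hm, rfl⟩

lemma mem_fv_ssub {σ : ℕ → Trm} {t : Trm} {n : ℕ} :
    n ∈ fv (ssub σ t) ↔ ∃ m ∈ fv t, n ∈ fv (σ m) := by
  induction t generalizing σ n with
  | var k => simp
  | app u v ihu ihv =>
    simp only [ssub_app, fv_app, Set.mem_union, ihu, ihv]
    constructor
    · rintro (⟨m, hm, h⟩ | ⟨m, hm, h⟩)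
      · exact ⟨m, Or.inl hm, h⟩
      · exact ⟨m, Or.inr hm, h⟩
    · rintro ⟨m, hm | hm, h⟩
      · exact Or.inl ⟨m, hm, h⟩
      · exact Or.inr ⟨m, hm, h⟩
  | lam u ih =>
    simp only [ssub_lam, mem_fv_lam, ih]
    constructor
    · rintro ⟨m, hm, hn⟩
      cases m with
      | zero => simp at hn
      | succ m =>
        simp only [upS_succ, mem_fv_rename] at hn
        obtain ⟨k, hk, hkn⟩ := hn
        refine ⟨m, hm, ?_⟩
        have : k = n := by omega
        exact this ▸ hk
    · rintro ⟨m, hm, hn⟩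
      refine ⟨m + 1, hm, ?_⟩
      simp only [upS_succ, mem_fv_rename]
      exact ⟨n, hn, rfl⟩

lemma ssub_congr_fv {σ τ : ℕ → Trm} {t : Trm}
    (h : ∀ n ∈ fv t, σ n = τ n) : ssub σ t = ssub τ t := by
  induction t generalizing σ τ with
  | var n => exact h n rfl
  | app u v ihu ihv =>
    simp only [ssub_app]
    rw [ihu fun n hn => h n (Or.inl hn), ihv fun n hn => h n (Or.inr hn)]
  | lam u ih =>
    simp only [ssub_lam]
    rw [ih]
    intro n hn
    cases n with
    | zero => rfl
    | succ n => simp only [upS_succ, h n hn]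

/-! ### lift and subst via rename / ssub -/

lemma lift_eq_rename (d : ℕ) (t : Trm) :
    lift d t = rename (fun n => if n < d then n else n + 1) t := by
  induction t generalizing d with
  | var n => simp only [lift, rename_var]; split <;> simp
  | app u v ihu ihv => simp [lift, ihu, ihv]
  | lam u ih =>
    have h : upR (fun n => if n < d then n else n + 1)
        = fun n => if n < d + 1 then n else n + 1 := by
      funext n; cases n with
      | zero => simp
      | succ n => simp only [upR_succ]; split <;> split <;> omega
    simp only [lift, ih, rename_lam, h]

lemma lift_zero_eq (t : Trm) : lift 0 t = rename Nat.succ t := by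
  rw [lift_eq_rename]
  congr 1

lemma liftTimes_eq_rename (k : ℕ) (t : Trm) :
    liftTimes k t = rename (fun n => n + k) t := by
  induction k with
  | zero =>
    show t = _
    conv_lhs => rw [← rename_id t]
    congr 1
  | succ k ih =>
    show (lift 0)^[k+1] t = _
    rw [Function.iterate_succ_apply', show (lift 0)^[k] t = liftTimes k t from rfl,
      ih, lift_zero_eq, rename_rename]
    congr 1

/-- the substitution environment corresponding to `subst · k v` -/
def sEnv (k : ℕ) (v : Trm) : ℕ → Trm := fun n =>
  if n < k then var n else if n = k then liftTimes k v else var (n - 1)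

lemma subst_eq_ssub (t : Trm) (k : ℕ) (v : Trm) :
    subst t k v = ssub (sEnv k v) t := by
  induction t generalizing k with
  | var n => simp [subst, sEnv]
  | app u w ihu ihw => simp [subst, ihu, ihw, sEnv]
  | lam u ih =>
    have h : sEnv (k+1) v = upS (sEnv k v) := by
      funext n
      cases n with
      | zero => simp [sEnv]
      | succ n =>
        simp only [sEnv, upS_succ]
        rcases Nat.lt_trichotomy n k with hlt | rfl | hgt
        · rw [if_pos (by omega), if_pos hlt]; rfl
        · rw [if_neg (by omega), if_pos rfl, if_neg (by omega), if_pos rfl]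
          rw [liftTimes_eq_rename, liftTimes_eq_rename, rename_rename]
          congr 1
        · rw [if_neg (by omega), if_neg (by omega), if_neg (by omega), if_neg (by omega)]
          simp only [rename_var]
          congr 1
          omega
    simp only [subst, ih, ssub_lam, h]

end Trm

namespace Trm

/-! ### more substitution facts -/

@[simp] lemma liftTimes_zero (t : Trm) : liftTimes 0 t = t := rfl

lemma subst_eq_ssub' (t : Trm) (v : Trm) :
    subst t 0 v = ssub (sEnv 0 v) t := subst_eq_ssub t 0 v

@[simp] lemma sEnv_zero_zero (v : Trm) : sEnv 0 v 0 = v := rfl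
@[simp] lemma sEnv_zero_succ (v : Trm) (n : ℕ) : sEnv 0 v (n + 1) = var n := rfl

lemma rename_subst_zero (r : ℕ → ℕ) (u v : Trm) :
    rename r (subst u 0 v) = subst (rename (upR r) u) 0 (rename r v) := by
  rw [subst_eq_ssub', subst_eq_ssub', rename_ssub, ssub_rename]
  apply ssub_congr_fv
  intro n _
  cases n with
  | zero => rfl
  | succ n => rfl

lemma ssub_subst_zero (σ : ℕ → Trm) (u v : Trm) :
    subst (ssub (upS σ) u) 0 (ssub σ v) = ssub σ (subst u 0 v) := by
  rw [subst_eq_ssub', subst_eq_ssub', ssub_ssub, ssub_ssub]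
  apply ssub_congr_fv
  intro n _
  cases n with
  | zero => rfl
  | succ n =>
    show ssub (sEnv 0 (ssub σ v)) (rename Nat.succ (σ n)) = σ n
    rw [ssub_rename]
    have : (sEnv 0 (ssub σ v)) ∘ Nat.succ = var := by
      funext m; rfl
    rw [this, ssub_id]

end Trm

/-! ### Beta congruence and normal forms -/

lemma beta_var {n : ℕ} {u : Trm} : ¬ Beta (.var n) u := fun h => nomatch h

lemma BetaStar.refl' {t : Trm} : BetaStar t t := Relation.ReflTransGen.refl

lemma BetaStar.appLs {u u' v : Trm} (h : BetaStar u u') :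
    BetaStar (.app u v) (.app u' v) :=
  Relation.ReflTransGen.lift (fun x => Trm.app x v) (fun _ _ h => Beta.appL h) _ _ h

lemma BetaStar.appRs {u v v' : Trm} (h : BetaStar v v') :
    BetaStar (.app u v) (.app u v') :=
  Relation.ReflTransGen.lift (fun x => Trm.app u x) (fun _ _ h => Beta.appR h) _ _ h

lemma BetaStar.lams {u u' : Trm} (h : BetaStar u u') :
    BetaStar (.lam u) (.lam u') :=
  Relation.ReflTransGen.lift Trm.lam (fun _ _ h => Beta.lam h) _ _ h

lemma BetaStar.apps2 {u u' v v' : Trm} (hu : BetaStar u u') (hv : BetaStar v v') :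
    BetaStar (.app u v) (.app u' v') :=
  Relation.ReflTransGen.trans (BetaStar.appLs hu) (BetaStar.appRs hv)

lemma BetaNormal.star_eq {t u : Trm} (h : BetaNormal t) (hs : BetaStar t u) : u = t := by
  induction hs using Relation.ReflTransGen.head_induction_on with
  | refl => rfl
  | head hstep _ _ => exact absurd hstep (h _)

lemma BetaNormal.app_inv {u v : Trm} (h : BetaNormal (.app u v)) :
    BetaNormal u ∧ BetaNormal v ∧ ∀ w, u ≠ .lam w := by
  refine ⟨fun s hs => h _ (Beta.appL hs), fun s hs => h _ (Beta.appR hs), ?_⟩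
  rintro w rfl
  exact h _ Beta.beta

lemma BetaNormal.lam_inv {u : Trm} (h : BetaNormal (.lam u)) : BetaNormal u :=
  fun s hs => h _ (Beta.lam hs)

/-- reducts of a term with head variable (binary application) keep their shape -/
lemma betaStar_head_var {p : ℕ} {f g w : Trm}
    (h : BetaStar (.app (.app (.var p) f) g) w) :
    ∃ f' g', w = .app (.app (.var p) f') g' ∧ BetaStar f f' ∧ BetaStar g g' := by
  induction h with
  | refl => exact ⟨f, g, rfl, .refl, .refl⟩
  | tail _ hstep ih =>
    obtain ⟨f', g', rfl, hf, hg⟩ := ih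
    cases hstep with
    | appL h' =>
      cases h' with
      | appL h'' => exact absurd h'' beta_var
      | appR h'' => exact ⟨_, g', rfl, hf.tail h'', hg⟩
    | appR h' => exact ⟨f', _, rfl, hf, hg.tail h'⟩

/-- reducts of a term with head variable (unary application) -/
lemma betaStar_head_var1 {p : ℕ} {f w : Trm}
    (h : BetaStar (.app (.var p) f) w) :
    ∃ f', w = .app (.var p) f' ∧ BetaStar f f' := by
  induction h with
  | refl => exact ⟨f, rfl, .refl⟩
  | tail _ hstep ih =>
    obtain ⟨f', rfl, hf⟩ := ih
    cases hstep with
    | appL h'' => exact absurd h'' beta_var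
    | appR h' => exact ⟨_, rfl, hf.tail h'⟩

/-! ### Parallel reduction and confluence -/

inductive Par : Trm → Trm → Prop
  | var (n : ℕ) : Par (.var n) (.var n)
  | app {u u' v v' : Trm} : Par u u' → Par v v' → Par (.app u v) (.app u' v')
  | lam {u u' : Trm} : Par u u' → Par (.lam u) (.lam u')
  | beta {u u' v v' : Trm} : Par u u' → Par v v' → Par (.app (.lam u) v) (u'.subst 0 v')

lemma Par.refl : ∀ t : Trm, Par t t
  | .var n => Par.var n
  | .app u v => Par.app (Par.refl u) (Par.refl v)
  | .lam u => Par.lam (Par.refl u)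

lemma Beta.toPar {t u : Trm} (h : Beta t u) : Par t u := by
  induction h with
  | beta => exact Par.beta (Par.refl _) (Par.refl _)
  | appL _ ih => exact Par.app ih (Par.refl _)
  | appR _ ih => exact Par.app (Par.refl _) ih
  | lam _ ih => exact Par.lam ih

lemma Par.toStar {t u : Trm} (h : Par t u) : BetaStar t u := by
  induction h with
  | var => exact .refl
  | app _ _ ih₁ ih₂ => exact BetaStar.apps2 ih₁ ih₂
  | lam _ ih => exact BetaStar.lams ih
  | beta _ _ ih₁ ih₂ =>
    exact Relation.ReflTransGen.tail (BetaStar.apps2 (BetaStar.lams ih₁) ih₂) Beta.beta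

lemma Par.rename {t t' : Trm} (r : ℕ → ℕ) (h : Par t t') :
    Par (t.rename r) (t'.rename r) := by
  induction h generalizing r with
  | var n => exact Par.var _
  | app _ _ ih₁ ih₂ => exact Par.app (ih₁ r) (ih₂ r)
  | lam _ ih => exact Par.lam (ih _)
  | @beta u u' v v' _ _ ih₁ ih₂ =>
    have := Par.beta (ih₁ (Trm.upR r)) (ih₂ r)
    rwa [← Trm.rename_subst_zero] at this

lemma Par.ssub {t t' : Trm} {σ σ' : ℕ → Trm} (h : Par t t')
    (hσ : ∀ n, Par (σ n) (σ' n)) : Par (Trm.ssub σ t) (Trm.ssub σ' t') := by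
  induction h generalizing σ σ' with
  | var n => exact hσ n
  | app _ _ ih₁ ih₂ => exact Par.app (ih₁ hσ) (ih₂ hσ)
  | lam _ ih =>
    refine Par.lam (ih fun n => ?_)
    cases n with
    | zero => exact Par.var 0
    | succ n => exact (hσ n).rename Nat.succ
  | @beta u u' v v' _ _ ih₁ ih₂ =>
    simp only [Trm.ssub_app, Trm.ssub_lam]
    have h2 : Par (Trm.ssub (Trm.upS σ) u) (Trm.ssub (Trm.upS σ') u') := by
      refine ih₁ fun n => ?_
      cases n with
      | zero => exact Par.var 0
      | succ n => exact (hσ n).rename Nat.succ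
    have := Par.beta h2 (ih₂ hσ)
    rwa [Trm.ssub_subst_zero] at this

lemma Par.subst_zero {a a' b b' : Trm} (ha : Par a a') (hb : Par b b') :
    Par (a.subst 0 b) (a'.subst 0 b') := by
  rw [Trm.subst_eq_ssub', Trm.subst_eq_ssub']
  refine ha.ssub fun n => ?_
  cases n with
  | zero => exact hb
  | succ n => exact Par.var n

/-- complete development -/
def cd : Trm → Trm
  | .var n => .var n
  | .lam u => .lam (cd u)
  | .app (.lam u) v => (cd u).subst 0 (cd v)
  | .app (.var n) v => .app (.var n) (cd v)
  | .app (.app a b) v => .app (cd (.app a b)) (cd v)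

lemma Par.var_inv {n : ℕ} {w : Trm} (h : Par (.var n) w) : w = .var n := by
  cases h; rfl

lemma Par.lam_inv {a w : Trm} (h : Par (.lam a) w) : ∃ a', w = .lam a' ∧ Par a a' := by
  cases h with
  | lam h' => exact ⟨_, rfl, h'⟩

lemma Par.cd_triangle {t s : Trm} (h : Par t s) : Par s (cd t) := by
  induction h with
  | var n => exact Par.var n
  | lam _ ih => exact Par.lam ih
  | @app u u' v v' h₁ h₂ ih₁ ih₂ =>
    cases u with
    | var n =>
      rw [h₁.var_inv]
      exact Par.app (Par.var n) ih₂
    | app a b => exact Par.app ih₁ ih₂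
    | lam u₀ =>
      obtain ⟨u₀', rfl, hu₀⟩ := h₁.lam_inv
      have ih : Par (Trm.lam u₀') (Trm.lam (cd u₀)) := ih₁
      have h' : Par u₀' (cd u₀) := by cases ih with | lam h'' => exact h''
      exact Par.beta h' ih₂
  | @beta u u' v v' h₁ h₂ ih₁ ih₂ =>
    exact Par.subst_zero ih₁ ih₂

theorem beta_confluent {t u v : Trm} (h₁ : BetaStar t u) (h₂ : BetaStar t v) :
    ∃ w, BetaStar u w ∧ BetaStar v w := by
  have hmono : ∀ {a b : Trm}, BetaStar a b → Relation.ReflTransGen Par a b :=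
    fun h => Relation.ReflTransGen.mono (fun _ _ (hh : Beta _ _) => hh.toPar) _ _ h
  have hback : ∀ {a b : Trm}, Relation.ReflTransGen Par a b → BetaStar a b := by
    intro a b h
    induction h with
    | refl => exact .refl
    | tail _ hp ih => exact Relation.ReflTransGen.trans ih hp.toStar
  have hcr := Relation.church_rosser (r := Par)
    (fun a b c hab hac => ⟨cd a, Relation.ReflGen.single hab.cd_triangle,
      Relation.ReflTransGen.single hac.cd_triangle⟩) (hmono h₁) (hmono h₂)
  obtain ⟨w, hw₁, hw₂⟩ := hcr
  exact ⟨w, hback hw₁, hback hw₂⟩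

/-- joining with a β-normal form -/
lemma betaStar_to_normal {t u v : Trm} (hu : BetaStar t u) (hn : BetaNormal v)
    (hv : BetaStar t v) : BetaStar u v := by
  obtain ⟨w, hw₁, hw₂⟩ := beta_confluent hu hv
  rwa [hn.star_eq hw₂] at hw₁

namespace Trm

/-! ### inversion lemmas for single steps -/

lemma beta_app_inv {a b s : Trm} (h : Beta (app a b) s) :
    (∃ u, a = lam u ∧ s = u.subst 0 b) ∨ (∃ a', Beta a a' ∧ s = app a' b)
      ∨ (∃ b', Beta b b' ∧ s = app a b') := by
  cases h with
  | beta => exact Or.inl ⟨_, rfl, rfl⟩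
  | appL h' => exact Or.inr (Or.inl ⟨_, h', rfl⟩)
  | appR h' => exact Or.inr (Or.inr ⟨_, h', rfl⟩)

lemma beta_lam_inv {a s : Trm} (h : Beta (lam a) s) : ∃ a', Beta a a' ∧ s = lam a' := by
  cases h with
  | lam h' => exact ⟨_, h', rfl⟩

lemma eta_app_inv {a b s : Trm} (h : Eta (app a b) s) :
    (∃ a', Eta a a' ∧ s = app a' b) ∨ (∃ b', Eta b b' ∧ s = app a b') := by
  cases h with
  | appL h' => exact Or.inl ⟨_, h', rfl⟩
  | appR h' => exact Or.inr ⟨_, h', rfl⟩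

lemma eta_lam_inv {a s : Trm} (h : Eta (lam a) s) :
    a = app (s.lift 0) (var 0) ∨ ∃ a', Eta a a' ∧ s = lam a' := by
  cases h with
  | eta u => exact Or.inl rfl
  | lam h' => exact Or.inr ⟨_, h', rfl⟩

/-! ### unlift -/

lemma not_mem_fv_lift (u : Trm) (d : ℕ) : d ∉ fv (lift d u) := by
  rw [lift_eq_rename]
  intro h
  rw [mem_fv_rename] at h
  obtain ⟨m, _, hm⟩ := h
  split at hm <;> omega

lemma exists_unlift : ∀ (t : Trm) (d : ℕ), d ∉ fv t → ∃ u, t = lift d u := by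
  intro t
  induction t with
  | var n =>
    intro d hd
    simp only [fv_var, Set.mem_singleton_iff] at hd
    refine ⟨var (if n < d then n else n - 1), ?_⟩
    simp only [lift]
    split_ifs with h1 h2 <;> simp_all <;> omega
  | app u v ihu ihv =>
    intro d hd
    simp only [fv_app, Set.mem_union] at hd
    push_neg at hd
    obtain ⟨u₀, rfl⟩ := ihu d hd.1
    obtain ⟨v₀, rfl⟩ := ihv d hd.2
    exact ⟨app u₀ v₀, rfl⟩
  | lam u ih =>
    intro d hd
    rw [mem_fv_lam] at hd
    obtain ⟨u₀, rfl⟩ := ih (d + 1) hd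
    exact ⟨lam u₀, rfl⟩

lemma subst_var_is_var (n k m : ℕ) : ∃ j, (var n).subst k (var m) = var j := by
  simp only [subst]
  split_ifs with h1 h2
  · exact ⟨n, rfl⟩
  · rw [liftTimes_eq_rename]; exact ⟨m + k, rfl⟩
  · exact ⟨n - 1, rfl⟩

/-- if the substituted term is hit at level `k+1` by a variable, original must be `var 0` -/
lemma subst_succ_eq_var_zero {a : Trm} {k m : ℕ} (h : a.subst (k+1) (var m) = var 0) :
    a = var 0 := by
  cases a with
  | var n =>
    simp only [subst] at h
    split_ifs at h with h1 h2
    · exact h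
    · rw [liftTimes_eq_rename] at h
      simp only [rename_var, var.injEq] at h
      omega
    · exfalso
      simp only [var.injEq] at h
      omega
  | app u v => simp [subst] at h
  | lam u => simp [subst] at h

lemma mem_fv_subst_of {a : Trm} {k : ℕ} {v : Trm} {n : ℕ} (hn : n ∈ fv a) (hk : n < k) :
    n ∈ fv (a.subst k v) := by
  rw [subst_eq_ssub, mem_fv_ssub]
  refine ⟨n, hn, ?_⟩
  simp [sEnv, if_pos hk]

/-! ### normality preservation under substitution -/

lemma rename_eq_lam {r : ℕ → ℕ} {v w : Trm} (h : v.rename r = lam w) : ∃ w₀, v = lam w₀ := by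
  cases v with
  | var n => simp at h
  | app a b => simp at h
  | lam a => exact ⟨a, rfl⟩

lemma beta_rename_rev : ∀ {t : Trm} {r : ℕ → ℕ} {s : Trm},
    Beta (t.rename r) s → ∃ s₀, Beta t s₀ := by
  intro t
  induction t with
  | var n => intro r s h; exact absurd h beta_var
  | app a b iha ihb =>
    intro r s h
    rw [rename_app] at h
    rcases beta_app_inv h with ⟨u, hu, _⟩ | ⟨a', ha', _⟩ | ⟨b', hb', _⟩
    · obtain ⟨a₀, rfl⟩ := rename_eq_lam hu
      exact ⟨a₀.subst 0 b, Beta.beta⟩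
    · obtain ⟨s₀, hs₀⟩ := iha ha'; exact ⟨_, Beta.appL hs₀⟩
    · obtain ⟨s₀, hs₀⟩ := ihb hb'; exact ⟨_, Beta.appR hs₀⟩
  | lam a ih =>
    intro r s h
    rw [rename_lam] at h
    obtain ⟨a', ha', _⟩ := beta_lam_inv h
    obtain ⟨s₀, hs₀⟩ := ih ha'
    exact ⟨_, Beta.lam hs₀⟩

lemma betaNormal_rename {t : Trm} (h : BetaNormal t) (r : ℕ → ℕ) :
    BetaNormal (t.rename r) := by
  intro s hs
  obtain ⟨s₀, hs₀⟩ := beta_rename_rev hs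
  exact h _ hs₀

lemma subst_eq_lam {a : Trm} {k : ℕ} {v w : Trm} (hnl : ∀ w', v ≠ lam w')
    (h : a.subst k v = lam w) : ∃ a₀, a = lam a₀ := by
  cases a with
  | var n =>
    exfalso
    simp only [subst] at h
    split_ifs at h
    all_goals
      first
      | exact Trm.noConfusion h
      | (rw [liftTimes_eq_rename] at h
         obtain ⟨w₀, rfl⟩ := rename_eq_lam h
         exact hnl w₀ rfl)
  | app u u' =>
    exfalso
    simp only [subst] at h
    exact Trm.noConfusion h
  | lam a₀ => exact ⟨a₀, rfl⟩

lemma beta_subst_rev {v : Trm} (hv : BetaNormal v) (hnl : ∀ w, v ≠ lam w) :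
    ∀ {t : Trm} {k : ℕ} {s : Trm}, Beta (t.subst k v) s → ∃ s₀, Beta t s₀ := by
  intro t
  induction t with
  | var n =>
    intro k s h
    simp only [subst] at h
    split_ifs at h
    · exact absurd h beta_var
    · rw [liftTimes_eq_rename] at h
      obtain ⟨s₀, hs₀⟩ := beta_rename_rev h
      exact absurd hs₀ (hv _)
    · exact absurd h beta_var
  | app a b iha ihb =>
    intro k s h
    simp only [subst] at h
    rcases beta_app_inv h with ⟨u, hu, _⟩ | ⟨a', ha', _⟩ | ⟨b', hb', _⟩
    · obtain ⟨a₀, rfl⟩ := subst_eq_lam hnl hu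
      exact ⟨a₀.subst 0 b, Beta.beta⟩
    · obtain ⟨s₀, hs₀⟩ := iha ha'; exact ⟨_, Beta.appL hs₀⟩
    · obtain ⟨s₀, hs₀⟩ := ihb hb'; exact ⟨_, Beta.appR hs₀⟩
  | lam a ih =>
    intro k s h
    simp only [subst] at h
    obtain ⟨a', ha', _⟩ := beta_lam_inv h
    obtain ⟨s₀, hs₀⟩ := ih ha'
    exact ⟨_, Beta.lam hs₀⟩

lemma betaNormal_subst {t : Trm} (h : BetaNormal t) {v : Trm} (hv : BetaNormal v)
    (hnl : ∀ w, v ≠ lam w) (k : ℕ) : BetaNormal (t.subst k v) := by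
  intro s hs
  obtain ⟨s₀, hs₀⟩ := beta_subst_rev hv hnl hs
  exact h _ hs₀

lemma betaNormal_substVar {t : Trm} (h : BetaNormal t) (k m : ℕ) :
    BetaNormal (t.subst k (var m)) :=
  betaNormal_subst h (fun _ hs => beta_var hs) (fun w hw => by cases hw) k

lemma eta_var {n : ℕ} {u : Trm} : ¬ Eta (.var n) u := fun h => nomatch h

lemma eta_subst_var_rev : ∀ {t : Trm} {k m : ℕ} {s : Trm},
    Eta (t.subst k (var m)) s → ∃ s₀, Eta t s₀ := by
  intro t
  induction t with
  | var n =>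
    intro k m s h
    obtain ⟨j, hj⟩ := subst_var_is_var n k m
    rw [hj] at h
    exact absurd h eta_var
  | app a b iha ihb =>
    intro k m s h
    simp only [subst] at h
    rcases eta_app_inv h with ⟨a', ha', _⟩ | ⟨b', hb', _⟩
    · obtain ⟨s₀, hs₀⟩ := iha ha'; exact ⟨_, Eta.appL hs₀⟩
    · obtain ⟨s₀, hs₀⟩ := ihb hb'; exact ⟨_, Eta.appR hs₀⟩
  | lam a ih =>
    intro k m s h
    simp only [subst] at h
    rcases eta_lam_inv h with heq | ⟨a', ha', _⟩
    · -- a.subst (k+1) (var m) = app (lift 0 s) (var 0)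
      cases a with
      | var n =>
        obtain ⟨j, hj⟩ := subst_var_is_var n (k+1) m
        rw [hj] at heq
        exact absurd heq (fun hh => Trm.noConfusion hh)
      | lam a₀ =>
        simp only [subst] at heq
        exact absurd heq (fun hh => Trm.noConfusion hh)
      | app a₁ a₂ =>
        simp only [subst, app.injEq] at heq
        obtain ⟨h₁, h₂⟩ := heq
        have ha₂ : a₂ = var 0 := subst_succ_eq_var_zero h₂
        have ha₁ : (0 : ℕ) ∉ fv a₁ := by
          intro h0
          have := mem_fv_subst_of (v := var m) h0 (by omega : (0:ℕ) < k + 1)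
          rw [h₁] at this
          exact not_mem_fv_lift s 0 this
        obtain ⟨u₀, rfl⟩ := exists_unlift a₁ 0 ha₁
        exact ⟨u₀, ha₂ ▸ Eta.eta u₀⟩
    · obtain ⟨s₀, hs₀⟩ := ih ha'
      exact ⟨_, Eta.lam hs₀⟩

lemma betaEtaNormal_substVar {t : Trm} (h : BetaEtaNormal t) (k m : ℕ) :
    BetaEtaNormal (t.subst k (var m)) := by
  intro s
  constructor
  · intro hs
    obtain ⟨s₀, hs₀⟩ := beta_subst_rev (fun _ h' => beta_var h') (fun w hw => by cases hw) hs
    exact (h s₀).1 hs₀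
  · intro hs
    obtain ⟨s₀, hs₀⟩ := eta_subst_var_rev hs
    exact (h s₀).2 hs₀

/-! ### closed β-normal terms are abstractions -/

lemma neutral_has_fv : ∀ (u v : Trm), BetaNormal (app u v) → ∃ n, n ∈ fv (app u v) := by
  intro u
  induction u with
  | var n => intro v _; exact ⟨n, Or.inl rfl⟩
  | lam a => intro v h; exact absurd Beta.beta (h _)
  | app a b ih =>
    intro v h
    obtain ⟨n, hn⟩ := ih b (fun s hs => h _ (Beta.appL hs))
    exact ⟨n, Or.inl hn⟩

lemma closed_normal_lam {t : Trm} (hc : Closed t) (hn : BetaNormal t) :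
    ∃ u, t = lam u := by
  cases t with
  | var n =>
    exfalso
    have h : n ∈ fv (var n) := rfl
    rw [Closed] at hc
    rw [hc] at h
    exact Set.notMem_empty n h
  | app u v =>
    obtain ⟨n, hfv⟩ := neutral_has_fv u v hn
    rw [Closed] at hc
    rw [hc] at hfv
    exact absurd hfv (Set.notMem_empty n)
  | lam u => exact ⟨u, rfl⟩

end Trm

/-! ### Realizability semantics for types -/

def SAT (S : Set Trm) : Prop := ∀ u v, Beta u v → v ∈ S → u ∈ S

def consV (S : Set Trm) (ρ : ℕ → Set Trm) : ℕ → Set Trm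
  | 0 => S
  | n + 1 => ρ n

@[simp] lemma consV_zero (S : Set Trm) (ρ : ℕ → Set Trm) : consV S ρ 0 = S := rfl
@[simp] lemma consV_succ (S : Set Trm) (ρ : ℕ → Set Trm) (n : ℕ) : consV S ρ (n+1) = ρ n := rfl

def interp : Ty → (ℕ → Set Trm) → Set Trm
  | .var n, ρ => ρ n
  | .arr A B, ρ => {t | ∀ a ∈ interp A ρ, Trm.app t a ∈ interp B ρ}
  | .all A, ρ => {t | ∀ S : Set Trm, SAT S → t ∈ interp A (consV S ρ)}

@[simp] lemma interp_var (n : ℕ) (ρ : ℕ → Set Trm) : interp (.var n) ρ = ρ n := rfl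
lemma interp_arr (A B : Ty) (ρ : ℕ → Set Trm) :
    interp (.arr A B) ρ = {t | ∀ a ∈ interp A ρ, Trm.app t a ∈ interp B ρ} := rfl
lemma interp_all (A : Ty) (ρ : ℕ → Set Trm) :
    interp (.all A) ρ = {t | ∀ S : Set Trm, SAT S → t ∈ interp A (consV S ρ)} := rfl

lemma interp_sat : ∀ (A : Ty) (ρ : ℕ → Set Trm), (∀ n, SAT (ρ n)) → SAT (interp A ρ) := by
  intro A
  induction A with
  | var n => intro ρ hρ; exact hρ n
  | arr A B ihA ihB =>
    intro ρ hρ u v huv hv a ha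
    exact ihB ρ hρ _ _ (Beta.appL huv) (hv a ha)
  | all A ih =>
    intro ρ hρ u v huv hv S hS
    refine ih (consV S ρ) ?_ _ _ huv (hv S hS)
    intro n; cases n with
    | zero => exact hS
    | succ n => exact hρ n

lemma interp_tlift (A : Ty) : ∀ (d : ℕ) (ρ : ℕ → Set Trm),
    interp (Ty.tlift d A) ρ = interp A (fun n => ρ (if n < d then n else n + 1)) := by
  induction A with
  | var n =>
    intro d ρ
    simp only [Ty.tlift]
    split <;> (rename_i h; simp [h])
  | arr A B ihA ihB =>
    intro d ρ
    simp only [Ty.tlift, interp_arr, ihA, ihB]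
  | all A ih =>
    intro d ρ
    simp only [Ty.tlift, interp_all]
    ext t
    simp only [Set.mem_setOf_eq]
    refine forall_congr' fun S => forall_congr' fun _ => ?_
    rw [ih]
    have henv : (fun n => consV S ρ (if n < d + 1 then n else n + 1))
        = consV S (fun n => ρ (if n < d then n else n + 1)) := by
      funext n
      cases n with
      | zero => simp
      | succ n =>
        by_cases h : n < d
        · rw [if_pos (by omega)]
          simp [h]
        · rw [if_neg (by omega)]
          simp [h]
    rw [henv]

lemma interp_tliftTimes (G : Ty) : ∀ (k : ℕ) (ρ : ℕ → Set Trm),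
    interp (Ty.tliftTimes k G) ρ = interp G (fun m => ρ (m + k)) := by
  intro k
  induction k with
  | zero =>
    intro ρ
    show interp G ρ = _
    congr 1
  | succ k ih =>
    intro ρ
    show interp ((Ty.tlift 0)^[k+1] G) ρ = _
    rw [Function.iterate_succ_apply', show (Ty.tlift 0)^[k] G = Ty.tliftTimes k G from rfl,
      interp_tlift, ih]
    congr 1

def subV (k : ℕ) (G : Ty) (ρ : ℕ → Set Trm) : ℕ → Set Trm := fun n =>
  if n < k then ρ n else if n = k then interp G (fun m => ρ (m + k)) else ρ (n - 1)

lemma interp_tsubst (A : Ty) : ∀ (k : ℕ) (G : Ty) (ρ : ℕ → Set Trm),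
    interp (A.tsubst k G) ρ = interp A (subV k G ρ) := by
  induction A with
  | var n =>
    intro k G ρ
    show (interp ((Ty.var n).tsubst k G) ρ) = subV k G ρ n
    simp only [Ty.tsubst, subV]
    split_ifs with h1 h2
    · rfl
    · subst h2
      exact interp_tliftTimes G n ρ
    · rfl
  | arr A B ihA ihB =>
    intro k G ρ
    simp only [Ty.tsubst, interp_arr, ihA, ihB]
  | all A ih =>
    intro k G ρ
    simp only [Ty.tsubst, interp_all]
    ext t
    simp only [Set.mem_setOf_eq]
    refine forall_congr' fun S => forall_congr' fun _ => ?_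
    rw [ih]
    have henv : subV (k + 1) G (consV S ρ) = consV S (subV k G ρ) := by
      funext n
      cases n with
      | zero => simp [subV]
      | succ n =>
        simp only [subV, consV_succ]
        rcases Nat.lt_trichotomy n k with h | rfl | h
        · rw [if_pos (by omega), if_pos h]
        · rw [if_neg (by omega), if_pos rfl, if_neg (by omega), if_pos rfl]
          congr 1
        · rw [if_neg (by omega), if_neg (by omega), if_neg (by omega), if_neg (by omega)]
          have : n - 1 + 1 = n := by omega
          rw [show n + 1 - 1 = n from rfl]
          cases n with
          | zero => omega
          | succ n' => rfl
    rw [henv]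

def consS (a : Trm) (σ : ℕ → Trm) : ℕ → Trm
  | 0 => a
  | n + 1 => σ n

lemma ssub_up_subst (σ : ℕ → Trm) (u a : Trm) :
    (Trm.ssub (Trm.upS σ) u).subst 0 a = Trm.ssub (consS a σ) u := by
  rw [Trm.subst_eq_ssub', Trm.ssub_ssub]
  apply Trm.ssub_congr_fv
  intro n _
  cases n with
  | zero => rfl
  | succ n =>
    show Trm.ssub (Trm.sEnv 0 a) (Trm.rename Nat.succ (σ n)) = σ n
    rw [Trm.ssub_rename]
    have : Trm.sEnv 0 a ∘ Nat.succ = Trm.var := by funext m; rfl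
    rw [this, Trm.ssub_id]

theorem soundness {Γ : List Ty} {t : Trm} {A : Ty} (h : Typing Γ t A) :
    ∀ (ρ : ℕ → Set Trm), (∀ n, SAT (ρ n)) →
      ∀ σ : ℕ → Trm, (∀ n B, Γ[n]? = some B → σ n ∈ interp B ρ) →
        Trm.ssub σ t ∈ interp A ρ := by
  induction h with
  | @ax Γ n A hget _ =>
    intro ρ hρ σ hσ
    exact hσ n A hget
  | @arrI Γ A B t _ _ ih =>
    intro ρ hρ σ hσ
    intro a ha
    have hstep : Beta (Trm.app (Trm.ssub σ (Trm.lam t)) a)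
        ((Trm.ssub (Trm.upS σ) t).subst 0 a) := Beta.beta
    refine interp_sat B ρ hρ _ _ hstep ?_
    rw [ssub_up_subst]
    refine ih ρ hρ (consS a σ) ?_
    intro n B' hB'
    cases n with
    | zero => simp at hB'; exact hB' ▸ ha
    | succ n => exact hσ n B' (by simpa using hB')
  | @arrE Γ A B u v _ _ ihu ihv =>
    intro ρ hρ σ hσ
    exact ihu ρ hρ σ hσ _ (ihv ρ hρ σ hσ)
  | @allI Γ A t _ _ ih =>
    intro ρ hρ σ hσ
    intro S hS
    refine ih (consV S ρ) ?_ σ ?_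
    · intro n; cases n with
      | zero => exact hS
      | succ n => exact hρ n
    · intro n B hB
      rw [List.getElem?_map] at hB
      cases hΓ : Γ[n]? with
      | none => rw [hΓ] at hB; simp at hB
      | some B₀ =>
        rw [hΓ] at hB
        simp only [Option.map_some] at hB
        cases hB
        rw [interp_tlift]
        have henv : (fun m => consV S ρ (if m < 0 then m else m + 1)) = ρ := by
          funext m; simp
        rw [henv]
        exact hσ n B₀ hΓ
  | @allE Γ A t G hG _ _ ih =>
    intro ρ hρ σ hσ
    rw [interp_tsubst]
    have hmem := ih ρ hρ σ hσ (interp G (fun m => ρ (m + 0)))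
      (interp_sat G _ (fun m => hρ (m + 0)))
    have henv : consV (interp G (fun m => ρ (m + 0))) ρ = subV 0 G ρ := by
      funext n
      cases n with
      | zero => simp [subV]
      | succ n => simp [subV]
    rwa [henv] at hmem

theorem soundness_closed {t : Trm} {A : Ty} (h : Typing [] t A) (hc : Trm.Closed t)
    (ρ : ℕ → Set Trm) (hρ : ∀ n, SAT (ρ n)) : t ∈ interp A ρ := by
  have := soundness h ρ hρ Trm.var (by intro n B hB; simp at hB)
  rwa [Trm.ssub_id] at this

/-! ### The classification of closed β-normal inhabitants of Binf -/

-- vars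
open Trm

lemma betaNormal_var (n : ℕ) : BetaNormal (var n) := fun _ h => beta_var h

lemma betaNormal_app {u v : Trm} (hu : BetaNormal u) (hv : BetaNormal v)
    (hnl : ∀ w, u ≠ lam w) : BetaNormal (app u v) := by
  intro s hs
  rcases beta_app_inv hs with ⟨w, hw, _⟩ | ⟨a', ha', _⟩ | ⟨b', hb', _⟩
  · exact hnl w hw
  · exact hu _ ha'
  · exact hv _ hb'

/-- the generators of the `X` interpretation: `z`, `y (x z)`, ... with
`x = var 0`, `y = var 1`, `z = var 3` -/
def GX : ℕ → Trm
  | 0 => var 3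
  | n + 1 => app (var 1) (app (var 0) (GX n))

lemma GX_normal : ∀ n, BetaNormal (GX n)
  | 0 => betaNormal_var 3
  | n + 1 =>
    betaNormal_app (betaNormal_var 1)
      (betaNormal_app (betaNormal_var 0) (GX_normal n) (fun _ h => Trm.noConfusion h))
      (fun _ h => Trm.noConfusion h)

def Xset : Set Trm := {t | ∃ n, BetaStar t (GX n)}
def Yset : Set Trm := {t | ∃ n, BetaStar t (app (var 0) (GX n))}
def FXY : Set Trm := {t | ∀ a ∈ Xset, app t a ∈ Yset}
def FYX : Set Trm := {t | ∀ a ∈ Yset, app t a ∈ Xset}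
def Uset : Set Trm :=
  {t | ∃ f g, f ∈ FXY ∧ g ∈ FYX ∧ BetaStar t (app (app (var 2) f) g)}

lemma sat_Xset : SAT Xset := by
  rintro u v huv ⟨n, hn⟩
  exact ⟨n, Relation.ReflTransGen.head huv hn⟩

lemma sat_Yset : SAT Yset := by
  rintro u v huv ⟨n, hn⟩
  exact ⟨n, Relation.ReflTransGen.head huv hn⟩

lemma sat_Uset : SAT Uset := by
  rintro u v huv ⟨f, g, hf, hg, hred⟩
  exact ⟨f, g, hf, hg, Relation.ReflTransGen.head huv hred⟩

lemma sat_univ : SAT (Set.univ : Set Trm) := fun _ _ _ _ => trivial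

/-- semantic key lemma: the behaviour of any closed term of type `Binf` -/
lemma key_sem {t : Trm} (ht : t ∈ interp Binf (fun _ => (Set.univ : Set Trm))) :
    ∃ f g, f ∈ FXY ∧ g ∈ FYX ∧
      BetaStar (app (app (app t (var 0)) (var 1)) (var 2))
        (app (app (var 2) f) g) := by
  rw [show Binf = Ty.all (Ty.all (Ty.arr (Ty.arr (.var 1) (.var 0)) (Ty.arr (Ty.arr (.var 0) (.var 1))
    (Ty.all (Ty.arr (Ty.arr (Ty.arr (.var 2) (.var 1)) (Ty.arr (Ty.arr (.var 1) (.var 2)) (.var 0))) (.var 0)))))) from rfl]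
    at ht
  rw [interp_all] at ht
  have h1 := ht Xset sat_Xset
  rw [interp_all] at h1
  have h2 := h1 Yset sat_Yset
  rw [interp_arr] at h2
  -- var 0 : X → Y
  have hx : var 0 ∈ interp (Ty.arr (.var 1) (.var 0))
      (consV Yset (consV Xset fun _ => Set.univ)) := by
    rw [interp_arr]
    rintro a ⟨n, hn⟩
    exact ⟨n, BetaStar.appRs hn⟩
  have h3 := h2 _ hx
  rw [interp_arr] at h3
  -- var 1 : Y → X
  have hy : var 1 ∈ interp (Ty.arr (.var 0) (.var 1))
      (consV Yset (consV Xset fun _ => Set.univ)) := by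
    rw [interp_arr]
    rintro a ⟨n, hn⟩
    exact ⟨n + 1, BetaStar.appRs hn⟩
  have h4 := h3 _ hy
  rw [interp_all] at h4
  have h5 := h4 Uset sat_Uset
  rw [interp_arr] at h5
  -- var 2 : (X → Y) → (Y → X) → U
  have hp : var 2 ∈ interp (Ty.arr (Ty.arr (.var 2) (.var 1)) (Ty.arr (Ty.arr (.var 1) (.var 2)) (.var 0)))
      (consV Uset (consV Yset (consV Xset fun _ => Set.univ))) := by
    rw [interp_arr]
    intro f hf
    rw [interp_arr]
    intro g hg
    refine ⟨f, g, ?_, ?_, Relation.ReflTransGen.refl⟩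
    · intro a ha
      exact hf a ha
    · intro a ha
      exact hg a ha
  have h6 := h5 _ hp
  obtain ⟨f, g, hf, hg, hred⟩ := h6
  exact ⟨f, g, hf, hg, hred⟩

/-! ### syntactic pre-image lemmas -/

def s0 : Trm := app (var 0) (var 3)

lemma s0_normal : BetaNormal s0 :=
  betaNormal_app (betaNormal_var 0) (betaNormal_var 3) (fun _ h => Trm.noConfusion h)

/-- pre-images of a variable under `subst 0 (var 3)` -/
lemma substz3_var {a : Trm} {j : ℕ} (h : a.subst 0 (var 3) = var j) :
    a = var (j + 1) ∨ (a = var 0 ∧ j = 3) := by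
  cases a with
  | var n =>
    cases n with
    | zero =>
      right
      simp only [Trm.subst, if_neg (by omega : ¬ (0:ℕ) < 0), if_pos rfl] at h
      have : (3 : ℕ) = j := by
        have := h
        simp only [Trm.liftTimes_zero] at this
        exact Trm.var.inj this
      exact ⟨rfl, this.symm⟩
    | succ n =>
      left
      simp only [Trm.subst, if_neg (by omega : ¬ n+1 < 0), if_neg (by omega : ¬ n+1 = 0)] at h
      have : n + 1 - 1 = n := rfl
      rw [this] at h
      rw [Trm.var.inj h]
  | app u v => exact absurd h (by simp [Trm.subst])
  | lam u => exact absurd h (by simp [Trm.subst])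

/-- pre-images of a variable under `subst 0 s0` -/
lemma substs0_var {a : Trm} {j : ℕ} (h : a.subst 0 s0 = var j) : a = var (j + 1) := by
  cases a with
  | var n =>
    cases n with
    | zero =>
      simp only [Trm.subst, if_neg (by omega : ¬ (0:ℕ) < 0), if_pos rfl,
        Trm.liftTimes_zero] at h
      exact absurd h (by simp [s0])
    | succ n =>
      simp only [Trm.subst, if_neg (by omega : ¬ n+1 < 0), if_neg (by omega : ¬ n+1 = 0)] at h
      have : n + 1 - 1 = n := rfl
      rw [this] at h
      rw [Trm.var.inj h]
  | app u v => exact absurd h (by simp [Trm.subst])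
  | lam u => exact absurd h (by simp [Trm.subst])

/-- pre-images of an application under `subst 0 v` when `v` is not an application -/
lemma subst0_app_inv {a v x y : Trm} (hv : ∀ x' y', v ≠ app x' y')
    (h : a.subst 0 v = app x y) :
    ∃ a₁ a₂, a = app a₁ a₂ ∧ a₁.subst 0 v = x ∧ a₂.subst 0 v = y := by
  cases a with
  | var n =>
    exfalso
    cases n with
    | zero =>
      simp only [Trm.subst, if_neg (by omega : ¬ (0:ℕ) < 0), if_pos rfl,
        Trm.liftTimes_zero] at h
      exact hv x y h
    | succ n =>
      simp only [Trm.subst, if_neg (by omega : ¬ n+1 < 0), if_neg (by omega : ¬ n+1 = 0)] at h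
      exact Trm.noConfusion h
  | app a₁ a₂ =>
    simp only [Trm.subst, Trm.app.injEq] at h
    exact ⟨a₁, a₂, rfl, h.1, h.2⟩
  | lam a₀ =>
    exfalso
    simp only [Trm.subst] at h
    exact Trm.noConfusion h

/-! ### pre-images of the GX chains -/

def PX : ℕ → Trm
  | 0 => var 0
  | i + 1 => app (var 2) (app (var 1) (PX i))

lemma PX_chain : ∀ i, app (var 1) (PX i) = chainBody 1 2 1 i
  | 0 => rfl
  | i + 1 => by
    show app (var 1) (app (var 2) (app (var 1) (PX i))) = app (var 1) (app (var 2) (chainBody 1 2 1 i))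
    rw [PX_chain i]

lemma preGX : ∀ (i : ℕ) (e : Trm), e.subst 0 (var 3) = GX i → (4 : ℕ) ∉ fv e → e = PX i := by
  intro i
  induction i with
  | zero =>
    intro e he hfv
    rcases substz3_var he with rfl | ⟨rfl, _⟩
    · exfalso; apply hfv; simp
    · rfl
  | succ i ih =>
    intro e he hfv
    obtain ⟨e₁, e₂, rfl, h₁, h₂⟩ := subst0_app_inv (by intro x' y' h; exact Trm.noConfusion h) he
    rcases substz3_var h₁ with rfl | ⟨_, h13⟩
    · obtain ⟨e₃, e₄, rfl, h₃, h₄⟩ :=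
        subst0_app_inv (by intro x' y' h; exact Trm.noConfusion h) h₂
      rcases substz3_var h₃ with rfl | ⟨_, h03⟩
      · have he₄ := ih e₄ h₄ (by
          intro hh
          apply hfv
          simp only [Trm.fv_app, Set.mem_union]
          tauto)
        rw [he₄]
        rfl
      · omega
    · omega

lemma GX_var3 {k : ℕ} (h : GX k = var 3) : k = 0 := by
  cases k with
  | zero => rfl
  | succ k => exact absurd h (by simp [GX])

/-- classification of the first component -/
lemma classifyF {h : Trm} (hn : BetaNormal h) (hfv : (3:ℕ) ∉ fv h) {i : ℕ}
    (hred : BetaStar (app h (var 3)) (app (var 0) (GX i))) :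
    (h = var 0 ∧ i = 0) ∨ h = lam (chainBody 1 2 1 i) := by
  cases h with
  | var m =>
    left
    have hnf : BetaNormal (app (var m) (var 3)) :=
      betaNormal_app (betaNormal_var m) (betaNormal_var 3) (fun _ hh => Trm.noConfusion hh)
    have := hnf.star_eq hred
    simp only [Trm.app.injEq] at this
    obtain ⟨h1, h2⟩ := this
    exact ⟨h1.symm, GX_var3 h2⟩
  | app u v =>
    exfalso
    have hnf : BetaNormal (app (app u v) (var 3)) :=
      betaNormal_app hn (betaNormal_var 3) (fun _ hh => Trm.noConfusion hh)
    have := hnf.star_eq hred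
    simp only [Trm.app.injEq] at this
    exact Trm.noConfusion this.1
  | lam d =>
    right
    have hstep : Beta (app (lam d) (var 3)) (d.subst 0 (var 3)) := Beta.beta
    have hdn : BetaNormal d := fun s hs => hn _ (Beta.lam hs)
    have hDn : BetaNormal (d.subst 0 (var 3)) := betaNormal_substVar hdn 0 3
    have hD : BetaStar (d.subst 0 (var 3)) (app (var 0) (GX i)) :=
      betaStar_to_normal (Relation.ReflTransGen.single hstep)
        (betaNormal_app (betaNormal_var 0) (GX_normal i) (fun _ hh => Trm.noConfusion hh)) hred
    have heq' : d.subst 0 (var 3) = app (var 0) (GX i) := (hDn.star_eq hD).symm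
    obtain ⟨d₁, d₂, rfl, h₁, h₂⟩ :=
      subst0_app_inv (by intro x' y' hh; exact Trm.noConfusion hh) heq'
    rcases substz3_var h₁ with rfl | ⟨_, h03⟩
    · have h4 : (4:ℕ) ∉ fv d₂ := by
        intro h4
        apply hfv
        rw [Trm.mem_fv_lam]
        simp only [Trm.fv_app, Set.mem_union]
        tauto
      rw [preGX i d₂ h₂ h4, PX_chain]
    · omega

/-- pre-images of an application under `subst 0 s0` -/
lemma subst0s0_app_inv {a x y : Trm} (h : a.subst 0 s0 = app x y) :
    (∃ a₁ a₂, a = app a₁ a₂ ∧ a₁.subst 0 s0 = x ∧ a₂.subst 0 s0 = y) ∨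
    (a = var 0 ∧ x = var 0 ∧ y = var 3) := by
  cases a with
  | var n =>
    cases n with
    | zero =>
      right
      simp only [Trm.subst, if_neg (by omega : ¬ (0:ℕ) < 0), if_pos rfl,
        Trm.liftTimes_zero] at h
      have : app (var 0) (var 3) = app x y := h
      simp only [Trm.app.injEq] at this
      exact ⟨rfl, this.1.symm, this.2.symm⟩
    | succ n =>
      exfalso
      simp only [Trm.subst, if_neg (by omega : ¬ n+1 < 0), if_neg (by omega : ¬ n+1 = 0)] at h
      exact Trm.noConfusion h
  | app a₁ a₂ =>
    left
    simp only [Trm.subst, Trm.app.injEq] at h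
    exact ⟨a₁, a₂, rfl, h.1, h.2⟩
  | lam a₀ =>
    exfalso
    simp only [Trm.subst] at h
    exact Trm.noConfusion h

/-- pre-images of the GX chains under `subst 0 s0` -/
lemma preGXG : ∀ (m : ℕ) (d : Trm), d.subst 0 s0 = GX m → (4 : ℕ) ∉ fv d →
    ∃ j, m = j + 1 ∧ d = chainBody 2 1 2 j := by
  intro m
  induction m with
  | zero =>
    intro d hd hfv
    exfalso
    have := substs0_var (j := 3) hd
    rw [this] at hfv
    simp at hfv
  | succ k ih =>
    intro d hd hfv
    rcases subst0s0_app_inv hd with ⟨d₁, d₂, rfl, h₁, h₂⟩ | ⟨_, hx, _⟩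
    · have hd₁ : d₁ = var 2 := substs0_var h₁
      subst hd₁
      rcases subst0s0_app_inv h₂ with ⟨d₃, d₄, rfl, h₃, h₄⟩ | ⟨hd₂, _, hy⟩
      · have hd₃ : d₃ = var 1 := substs0_var h₃
        subst hd₃
        have h4 : (4:ℕ) ∉ fv d₄ := by
          simp only [Trm.fv_app, Set.mem_union] at hfv
          tauto
        obtain ⟨j', rfl, hd₄⟩ := ih d₄ h₄ h4
        exact ⟨j' + 1, rfl, by rw [hd₄]; rfl⟩
      · subst hd₂
        have hk : k = 0 := GX_var3 hy
        subst hk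
        exact ⟨0, rfl, rfl⟩
    · exact absurd hx (by simp)

/-- classification of the second component -/
lemma classifyG {h : Trm} (hn : BetaNormal h) (hfv : (3:ℕ) ∉ fv h) {m : ℕ}
    (hred : BetaStar (app h s0) (GX m)) :
    h = var 1 ∨ ∃ j, h = lam (chainBody 2 1 2 j) := by
  cases h with
  | var n =>
    left
    have hnf : BetaNormal (app (var n) s0) :=
      betaNormal_app (betaNormal_var n) s0_normal (fun _ hh => Trm.noConfusion hh)
    have heq := hnf.star_eq hred
    cases m with
    | zero => exact absurd heq (by simp [GX])
    | succ k =>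
      simp only [GX, Trm.app.injEq] at heq
      rw [Trm.var.inj heq.1]
  | app u v =>
    exfalso
    have hnf : BetaNormal (app (app u v) s0) :=
      betaNormal_app hn s0_normal (fun _ hh => Trm.noConfusion hh)
    have heq := hnf.star_eq hred
    cases m with
    | zero => exact absurd heq (by simp [GX])
    | succ k =>
      simp only [GX, Trm.app.injEq] at heq
      exact Trm.noConfusion heq.1
  | lam d =>
    right
    have hstep : Beta (app (lam d) s0) (d.subst 0 s0) := Beta.beta
    have hdn : BetaNormal d := fun s hs => hn _ (Beta.lam hs)
    have hDn : BetaNormal (d.subst 0 s0) :=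
      betaNormal_subst hdn s0_normal (fun _ hh => Trm.noConfusion hh) 0
    have hD : BetaStar (d.subst 0 s0) (GX m) :=
      betaStar_to_normal (Relation.ReflTransGen.single hstep) (GX_normal m) hred
    have heq : d.subst 0 s0 = GX m := (hDn.star_eq hD).symm
    have h4 : (4:ℕ) ∉ fv d := by
      intro h4
      exact hfv (by simpa using h4)
    obtain ⟨j, _, hd⟩ := preGXG m d heq h4
    exact ⟨j, by rw [hd]⟩

/-! ### the swap substitution T -/

def TauF : ℕ → Trm
  | 0 => var 2
  | 1 => var 1
  | 2 => var 0
  | (n+3) => var n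

lemma T_eq_ssub (u : Trm) :
    ((u.subst 2 (var 0)).subst 1 (var 1)).subst 0 (var 2) = Trm.ssub TauF u := by
  rw [Trm.subst_eq_ssub, Trm.subst_eq_ssub, Trm.subst_eq_ssub, Trm.ssub_ssub, Trm.ssub_ssub]
  apply Trm.ssub_congr_fv
  intro n _
  match n with
  | 0 => rfl
  | 1 => rfl
  | 2 => rfl
  | (n+3) =>
    show Trm.ssub _ (Trm.ssub _ (Trm.sEnv 2 (var 0) (n+3))) = var n
    have e1 : Trm.sEnv 2 (var 0) (n+3) = var (n+2) := by
      simp only [Trm.sEnv]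
      rw [if_neg (by omega), if_neg (by omega)]
      rfl
    rw [e1]
    show Trm.ssub _ (Trm.sEnv 1 (var 1) (n+2)) = var n
    have e2 : Trm.sEnv 1 (var 1) (n+2) = var (n+1) := by
      simp only [Trm.sEnv]
      rw [if_neg (by omega), if_neg (by omega)]
      rfl
    rw [e2]
    show Trm.sEnv 0 (var 2) (n+1) = var n
    rfl

lemma fv_tau_lt {u : Trm} (hu : ∀ n ∈ fv u, n < 3) : ∀ n ∈ fv (Trm.ssub TauF u), n < 3 := by
  intro n hn
  rw [Trm.mem_fv_ssub] at hn
  obtain ⟨m, hm, hn'⟩ := hn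
  have := hu m hm
  match m, this with
  | 0, _ => simp [TauF] at hn'; omega
  | 1, _ => simp [TauF] at hn'; omega
  | 2, _ => simp [TauF] at hn'; omega

lemma tau_invol {u : Trm} (hu : ∀ n ∈ fv u, n < 3) :
    Trm.ssub TauF (Trm.ssub TauF u) = u := by
  rw [Trm.ssub_ssub]
  have : Trm.ssub (fun n => Trm.ssub TauF (TauF n)) u = Trm.ssub Trm.var u := by
    apply Trm.ssub_congr_fv
    intro n hn
    have := hu n hn
    match n, this with
    | 0, _ => rfl
    | 1, _ => rfl
    | 2, _ => rfl
  rw [this, Trm.ssub_id]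

lemma ssub_chainBody {σ : ℕ → Trm} {x y z x' y' z' : ℕ}
    (hx : σ x = var x') (hy : σ y = var y') (hz : σ z = var z') (h0 : σ 0 = var 0) :
    ∀ n, Trm.ssub σ (chainBody x y z n) = chainBody x' y' z' n := by
  intro n
  induction n with
  | zero => simp [chainBody, hz, h0]
  | succ n ih => simp [chainBody, hx, hy, ih]

lemma tau_app_inv {c f' g' : Trm} (hfv : ∀ n ∈ fv c, n < 3)
    (h : Trm.ssub TauF c = app (app (var 2) f') g') :
    ∃ F G, c = app (app (var 0) F) G ∧ f' = Trm.ssub TauF F ∧ g' = Trm.ssub TauF G := by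
  cases c with
  | var n =>
    exfalso
    have := hfv n (by simp)
    match n, this with
    | 0, _ => exact Trm.noConfusion h
    | 1, _ => exact Trm.noConfusion h
    | 2, _ => exact Trm.noConfusion h
  | lam c₀ => exact absurd h (by simp)
  | app c₁ c₂ =>
    simp only [Trm.ssub_app, Trm.app.injEq] at h
    obtain ⟨h₁, h₂⟩ := h
    cases c₁ with
    | var n =>
      exfalso
      have := hfv n (by simp)
      match n, this with
      | 0, _ => exact Trm.noConfusion h₁
      | 1, _ => exact Trm.noConfusion h₁
      | 2, _ => exact Trm.noConfusion h₁
    | lam c₀ => exact absurd h₁ (by simp)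
    | app c₁₁ c₁₂ =>
      simp only [Trm.ssub_app, Trm.app.injEq] at h₁
      obtain ⟨h₁₁, h₁₂⟩ := h₁
      cases c₁₁ with
      | var n =>
        have hb := hfv n (by simp)
        match n, hb with
        | 0, _ => exact ⟨c₁₂, c₂, rfl, h₁₂.symm, h₂.symm⟩
        | 1, _ => exact absurd h₁₁ (by simp [TauF])
        | 2, _ => exact absurd h₁₁ (by simp [TauF])
      | lam c₀ => exact absurd h₁₁ (by simp)
      | app a b => exact absurd h₁₁ (by simp)


/-! ### bounding free variables under abstractions -/

lemma fv_lamN_aux : ∀ (k : ℕ) (c : Trm) (n : ℕ), n ∈ fv c → n < k ∨ (n - k) ∈ fv (lamN k c) := by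
  intro k
  induction k with
  | zero => intro c n hn; right; simpa [lamN] using hn
  | succ k ih =>
    intro c n hn
    rcases ih c n hn with h | h
    · left; omega
    · rcases Nat.eq_zero_or_pos (n - k) with h0 | hpos
      · left; omega
      · right
        show n - (k+1) ∈ fv (lam (lamN k c))
        rw [Trm.mem_fv_lam, show n - (k+1) + 1 = n - k by omega]
        exact h

lemma fv_lamN_bound {k : ℕ} {c : Trm} (hc : Trm.Closed (lamN k c)) : ∀ n ∈ fv c, n < k := by
  intro n hn
  rcases fv_lamN_aux k c n hn with h | h
  · exact h
  · rw [Trm.Closed] at hc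
    rw [hc] at h
    exact absurd h (Set.notMem_empty _)

lemma fv_subst_var_bound {a : Trm} {k m K : ℕ} (h : ∀ n ∈ fv a, n < K) (hmk : m + k < K) :
    ∀ n ∈ fv (a.subst k (var m)), n < K := by
  intro n hn
  rw [Trm.subst_eq_ssub, Trm.mem_fv_ssub] at hn
  obtain ⟨l, hl, hnl⟩ := hn
  have hlK := h l hl
  simp only [Trm.sEnv] at hnl
  split_ifs at hnl with h1 h2
  · simp at hnl; omega
  · rw [Trm.liftTimes_eq_rename] at hnl; simp at hnl; omega
  · simp at hnl; omega

/-! ### the main classification -/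

theorem classify {t : Trm} (hc : Trm.Closed t) (hn : BetaNormal t)
    (hsem : t ∈ interp Binf (fun _ => (Set.univ : Set Trm))) :
    ∃ F G, t = lam (lam (lam (app (app (var 0) F) G))) ∧
      (F = var 2 ∨ ∃ i, F = lam (chainBody 3 2 3 i)) ∧
      (G = var 1 ∨ ∃ j, G = lam (chainBody 2 3 2 j)) := by
  obtain ⟨f, g, hf, hg, hstar⟩ := key_sem hsem
  obtain ⟨a, rfl⟩ := closed_normal_lam hc hn
  have hfa : ∀ n ∈ fv a, n < 1 := fv_lamN_bound (k := 1) hc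
  cases a with
  | var n =>
    exfalso
    have hn0 : n = 0 := by have := hfa n (by simp); omega
    subst hn0
    have hred2 : BetaStar (app (app (app (lam (var 0)) (var 0)) (var 1)) (var 2))
        (app (app (var 0) (var 1)) (var 2)) :=
      Relation.ReflTransGen.single (Beta.appL (Beta.appL Beta.beta))
    have hN : BetaNormal (app (app (var 0) (var 1)) (var 2)) :=
      betaNormal_app
        (betaNormal_app (betaNormal_var 0) (betaNormal_var 1) (fun _ hh => Trm.noConfusion hh))
        (betaNormal_var 2) (fun _ hh => Trm.noConfusion hh)
    have hj := betaStar_to_normal hstar hN hred2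
    obtain ⟨f', g', heq, -, -⟩ := betaStar_head_var hj
    simp only [Trm.app.injEq] at heq
    exact absurd (Trm.var.inj heq.1.1) (by omega)
  | app u v =>
    exfalso
    have hna : BetaNormal (app u v) := fun s hs => hn _ (Beta.lam hs)
    have ha1n : BetaNormal ((app u v).subst 0 (var 0)) := betaNormal_substVar hna 0 0
    have hred2 : BetaStar (app (app (app (lam (app u v)) (var 0)) (var 1)) (var 2))
        (app (app ((app u v).subst 0 (var 0)) (var 1)) (var 2)) :=
      Relation.ReflTransGen.single (Beta.appL (Beta.appL Beta.beta))
    have hN : BetaNormal (app (app ((app u v).subst 0 (var 0)) (var 1)) (var 2)) := by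
      refine betaNormal_app (betaNormal_app ha1n (betaNormal_var 1) ?_) (betaNormal_var 2)
        (fun _ hh => Trm.noConfusion hh)
      intro w hw
      exact Trm.noConfusion hw
    have hj := betaStar_to_normal hstar hN hred2
    obtain ⟨f', g', heq, -, -⟩ := betaStar_head_var hj
    simp only [Trm.app.injEq] at heq
    have hbad : app (u.subst 0 (var 0)) (v.subst 0 (var 0)) = var 2 := heq.1.1
    exact Trm.noConfusion hbad
  | lam b =>
    have hfb : ∀ n ∈ fv b, n < 2 := fv_lamN_bound (k := 2) hc
    have hnb : BetaNormal b := fun s hs => hn _ (Beta.lam (Beta.lam hs))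
    cases b with
    | var n =>
      exfalso
      have hBvar : ∃ m, ((var n).subst 1 (var 0)).subst 0 (var 1) = var m := by
        obtain ⟨j, hj⟩ := Trm.subst_var_is_var n 1 0
        rw [hj]
        exact Trm.subst_var_is_var j 0 1
      obtain ⟨m, hm⟩ := hBvar
      have hred2 : BetaStar (app (app (app (lam (lam (var n))) (var 0)) (var 1)) (var 2))
          (app (((var n).subst 1 (var 0)).subst 0 (var 1)) (var 2)) := by
        refine Relation.ReflTransGen.head (Beta.appL (Beta.appL Beta.beta)) ?_
        exact Relation.ReflTransGen.single (Beta.appL Beta.beta)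
      rw [hm] at hred2
      have hN : BetaNormal (app (var m) (var 2)) :=
        betaNormal_app (betaNormal_var m) (betaNormal_var 2) (fun _ hh => Trm.noConfusion hh)
      have hj := betaStar_to_normal hstar hN hred2
      obtain ⟨f', g', heq, -, -⟩ := betaStar_head_var hj
      simp only [Trm.app.injEq] at heq
      exact Trm.noConfusion heq.1
    | app u v =>
      exfalso
      have hB : ((app u v).subst 1 (var 0)).subst 0 (var 1)
          = app ((u.subst 1 (var 0)).subst 0 (var 1)) ((v.subst 1 (var 0)).subst 0 (var 1)) := rfl
      have hBn : BetaNormal (((app u v).subst 1 (var 0)).subst 0 (var 1)) :=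
        betaNormal_substVar (betaNormal_substVar hnb 1 0) 0 1
      have hBfv : ∀ n ∈ fv (((app u v).subst 1 (var 0)).subst 0 (var 1)), n < 2 :=
        fv_subst_var_bound (fv_subst_var_bound hfb (by omega)) (by omega)
      have hred2 : BetaStar (app (app (app (lam (lam (app u v))) (var 0)) (var 1)) (var 2))
          (app (((app u v).subst 1 (var 0)).subst 0 (var 1)) (var 2)) := by
        refine Relation.ReflTransGen.head (Beta.appL (Beta.appL Beta.beta)) ?_
        exact Relation.ReflTransGen.single (Beta.appL Beta.beta)
      have hN : BetaNormal (app (((app u v).subst 1 (var 0)).subst 0 (var 1)) (var 2)) := by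
        refine betaNormal_app hBn (betaNormal_var 2) ?_
        intro w hw
        rw [hB] at hw
        exact Trm.noConfusion hw
      have hj := betaStar_to_normal hstar hN hred2
      obtain ⟨f', g', heq, -, -⟩ := betaStar_head_var hj
      rw [hB] at heq
      simp only [Trm.app.injEq] at heq
      have h2 : (2:ℕ) ∈ fv (((app u v).subst 1 (var 0)).subst 0 (var 1)) := by
        rw [hB, heq.1.1]
        simp
      exact absurd (hBfv 2 h2) (by omega)
    | lam c =>
      have hfc : ∀ n ∈ fv c, n < 3 := fv_lamN_bound (k := 3) hc
      have hnc : BetaNormal c := fun s hs => hn _ (Beta.lam (Beta.lam (Beta.lam hs)))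
      have hredN : BetaStar (app (app (app (lam (lam (lam c))) (var 0)) (var 1)) (var 2))
          (((c.subst 2 (var 0)).subst 1 (var 1)).subst 0 (var 2)) := by
        refine Relation.ReflTransGen.head (Beta.appL (Beta.appL Beta.beta)) ?_
        refine Relation.ReflTransGen.head (Beta.appL Beta.beta) ?_
        exact Relation.ReflTransGen.single Beta.beta
      have hNnormal : BetaNormal (((c.subst 2 (var 0)).subst 1 (var 1)).subst 0 (var 2)) :=
        betaNormal_substVar (betaNormal_substVar (betaNormal_substVar hnc 2 0) 1 1) 0 2
      have hNtau : ((c.subst 2 (var 0)).subst 1 (var 1)).subst 0 (var 2) = Trm.ssub TauF c :=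
        T_eq_ssub c
      have hjoin := betaStar_to_normal hstar hNnormal hredN
      obtain ⟨f', g', hNeq, hff', hgg'⟩ := betaStar_head_var hjoin
      rw [hNtau] at hNeq
      obtain ⟨F, G, hcF, hf'F, hg'G⟩ := tau_app_inv hfc hNeq
      have hfvF : ∀ n ∈ fv F, n < 3 := by
        intro n hn'
        refine hfc n ?_
        rw [hcF]
        simp only [Trm.fv_app, Set.mem_union]
        tauto
      have hfvG : ∀ n ∈ fv G, n < 3 := by
        intro n hn'
        refine hfc n ?_
        rw [hcF]
        simp only [Trm.fv_app, Set.mem_union]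
        tauto
      -- normality of the components
      have hN2 : BetaNormal (app (app (var 2) f') g') := by
        rw [← hNeq, ← hNtau]
        exact hNnormal
      have hf'n : BetaNormal f' := ((hN2.app_inv.1).app_inv).2.1
      have hg'n : BetaNormal g' := hN2.app_inv.2.1
      have hfvf' : (3:ℕ) ∉ fv f' := by
        rw [hf'F]
        intro h3
        exact absurd (fv_tau_lt hfvF 3 h3) (by omega)
      have hfvg' : (3:ℕ) ∉ fv g' := by
        rw [hg'G]
        intro h3
        exact absurd (fv_tau_lt hfvG 3 h3) (by omega)
      -- the semantic information about f' and g'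
      obtain ⟨i, hired⟩ := hf (var 3) ⟨0, Relation.ReflTransGen.refl⟩
      have hredf' : BetaStar (app f' (var 3)) (app (var 0) (GX i)) :=
        betaStar_to_normal (BetaStar.appLs hff')
          (betaNormal_app (betaNormal_var 0) (GX_normal i) (fun _ hh => Trm.noConfusion hh)) hired
      obtain ⟨m, hgred⟩ := hg s0 ⟨0, Relation.ReflTransGen.refl⟩
      have hredg' : BetaStar (app g' s0) (GX m) :=
        betaStar_to_normal (BetaStar.appLs hgg') (GX_normal m) hgred
      -- recover F and G
      have hFval : F = Trm.ssub TauF f' := by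
        have h' := congrArg (Trm.ssub TauF) hf'F
        rw [tau_invol hfvF] at h'
        exact h'.symm
      have hGval : G = Trm.ssub TauF g' := by
        have h' := congrArg (Trm.ssub TauF) hg'G
        rw [tau_invol hfvG] at h'
        exact h'.symm
      refine ⟨F, G, by rw [hcF], ?_, ?_⟩
      · rcases classifyF hf'n hfvf' hredf' with ⟨hf0, -⟩ | hfl
        · left
          rw [hFval, hf0]
          rfl
        · right
          refine ⟨i, ?_⟩
          rw [hFval, hfl, Trm.ssub_lam,
            ssub_chainBody (σ := Trm.upS TauF) (x := 1) (y := 2) (z := 1)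
              (x' := 3) (y' := 2) (z' := 3) rfl rfl rfl rfl i]
      · rcases classifyG hg'n hfvg' hredg' with hg1 | ⟨j, hgl⟩
        · left
          rw [hGval, hg1]
          rfl
        · right
          refine ⟨j, ?_⟩
          rw [hGval, hgl, Trm.ssub_lam,
            ssub_chainBody (σ := Trm.upS TauF) (x := 2) (y := 1) (z := 2)
              (x' := 2) (y' := 3) (z' := 2) rfl rfl rfl rfl j]

/-! ### lift computations for the chain components -/

lemma lift1_cb212 : ∀ n, (chainBody 2 1 2 n).lift 1 = chainBody 3 2 3 n := by
  intro n
  induction n with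
  | zero => rfl
  | succ n ih => simp [chainBody, Trm.lift, ih]

lemma lift1_cb121 : ∀ n, (chainBody 1 2 1 n).lift 1 = chainBody 2 3 2 n := by
  intro n
  induction n with
  | zero => rfl
  | succ n ih => simp [chainBody, Trm.lift, ih]

/-- the first component of `Tij` -/
def Fc : ℕ → Trm
  | 0 => var 2
  | i + 1 => lam (chainBody 3 2 3 (i + 1))

/-- the second component of `Tij` -/
def Gc : ℕ → Trm
  | 0 => var 1
  | j + 1 => lam (chainBody 2 3 2 (j + 1))

lemma Tij_eq (i j : ℕ) :
    Tij i j = lam (lam (lam (app (app (var 0) (Fc i)) (Gc j)))) := by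
  have h1 : (chain 1 0 1 i).lift 0 = Fc i := by
    cases i with
    | zero => rfl
    | succ i =>
      show lam ((chainBody 2 1 2 (i+1)).lift 1) = Fc (i+1)
      rw [lift1_cb212]
      rfl
  have h2 : (chain 0 1 0 j).lift 0 = Gc j := by
    cases j with
    | zero => rfl
    | succ j =>
      show lam ((chainBody 1 2 1 (j+1)).lift 1) = Gc (j+1)
      rw [lift1_cb121]
      rfl
  show lam (lam (lam (app (app (var 0) ((chain 1 0 1 i).lift 0)) ((chain 0 1 0 j).lift 0)))) = _
  rw [h1, h2]

/-! ### typing of Tij -/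

def A1 : Ty := Ty.arr (.var 1) (.var 0)
def A2 : Ty := Ty.arr (.var 0) (.var 1)
def A1' : Ty := Ty.arr (.var 2) (.var 1)
def A2' : Ty := Ty.arr (.var 1) (.var 2)
def Dd : Ty := Ty.arr A1' (Ty.arr A2' (.var 0))

lemma proper_A1 : A1.Proper := ⟨trivial, trivial⟩
lemma proper_A2 : A2.Proper := ⟨trivial, trivial⟩
lemma proper_A1' : A1'.Proper := ⟨trivial, trivial⟩
lemma proper_A2' : A2'.Proper := ⟨trivial, trivial⟩
lemma proper_Dd : Dd.Proper := ⟨proper_A1', proper_A2', trivial⟩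

lemma ctx3_proper : ∀ B ∈ [Dd, A2', A1'], B.Proper := by
  intro B hB
  simp only [List.mem_cons, List.not_mem_nil, or_false] at hB
  rcases hB with rfl | rfl | rfl
  · exact proper_Dd
  · exact proper_A2'
  · exact proper_A1'

lemma cb_typing_F : ∀ n, Typing [Ty.var 2, Dd, A2', A1'] (chainBody 3 2 3 n) (Ty.var 1) := by
  have hprop : ∀ B ∈ [Ty.var 2, Dd, A2', A1'], B.Proper := by
    intro B hB
    simp only [List.mem_cons, List.not_mem_nil, or_false] at hB
    rcases hB with rfl | rfl | rfl | rfl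
    · exact trivial
    · exact proper_Dd
    · exact proper_A2'
    · exact proper_A1'
  intro n
  induction n with
  | zero =>
    exact Typing.arrE (Typing.ax (by rfl) hprop) (Typing.ax (by rfl) hprop)
  | succ n ih =>
    exact Typing.arrE (Typing.ax (by rfl) hprop)
      (Typing.arrE (Typing.ax (by rfl) hprop) ih)

lemma cb_typing_G : ∀ n, Typing [Ty.var 1, Dd, A2', A1'] (chainBody 2 3 2 n) (Ty.var 2) := by
  have hprop : ∀ B ∈ [Ty.var 1, Dd, A2', A1'], B.Proper := by
    intro B hB
    simp only [List.mem_cons, List.not_mem_nil, or_false] at hB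
    rcases hB with rfl | rfl | rfl | rfl
    · exact trivial
    · exact proper_Dd
    · exact proper_A2'
    · exact proper_A1'
  intro n
  induction n with
  | zero =>
    exact Typing.arrE (Typing.ax (by rfl) hprop) (Typing.ax (by rfl) hprop)
  | succ n ih =>
    exact Typing.arrE (Typing.ax (by rfl) hprop)
      (Typing.arrE (Typing.ax (by rfl) hprop) ih)

lemma Fc_typing (i : ℕ) : Typing [Dd, A2', A1'] (Fc i) A1' := by
  cases i with
  | zero => exact Typing.ax (by rfl) ctx3_proper
  | succ i => exact Typing.arrI trivial (cb_typing_F (i+1))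

lemma Gc_typing (j : ℕ) : Typing [Dd, A2', A1'] (Gc j) A2' := by
  cases j with
  | zero => exact Typing.ax (by rfl) ctx3_proper
  | succ j => exact Typing.arrI trivial (cb_typing_G (j+1))

lemma Tij_typing (i j : ℕ) : Typing [] (Tij i j) Binf := by
  rw [Tij_eq]
  have hbody : Typing [Dd, A2', A1'] (app (app (var 0) (Fc i)) (Gc j)) (Ty.var 0) :=
    Typing.arrE (Typing.arrE (Typing.ax (by rfl) ctx3_proper) (Fc_typing i)) (Gc_typing j)
  have hconj : Typing [A2', A1'] (lam (app (app (var 0) (Fc i)) (Gc j)))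
      (Ty.arr Dd (Ty.var 0)) := Typing.arrI proper_Dd hbody
  have hconj' : Typing [A2, A1] (lam (app (app (var 0) (Fc i)) (Gc j)))
      (conjN [A1, A2]) := by
    refine Typing.allI ?_ ?_
    · show (0:ℕ) ∈ Ty.tfv (.arr Dd (.var 0))
      right; rfl
    · exact hconj
  have h2 : Typing [A1] (lam (lam (app (app (var 0) (Fc i)) (Gc j))))
      (Ty.arr A2 (conjN [A1, A2])) := Typing.arrI proper_A2 hconj'
  have h1 : Typing [] (lam (lam (lam (app (app (var 0) (Fc i)) (Gc j)))))
      (Ty.arr A1 (Ty.arr A2 (conjN [A1, A2]))) := Typing.arrI proper_A1 h2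
  refine Typing.allI ?_ (Typing.allI ?_ h1)
  · show (0:ℕ) ∈ Ty.tfv (allN 1 (arrList [A1, A2] (conjN [A1, A2])))
    show (1:ℕ) ∈ Ty.tfv (arrList [A1, A2] (conjN [A1, A2]))
    left; left; rfl
  · show (0:ℕ) ∈ Ty.tfv (arrList [A1, A2] (conjN [A1, A2]))
    left; right; rfl

/-! ### decision procedures for normality -/

def isLamB : Trm → Bool
  | .lam _ => true
  | _ => false

def nbB : Trm → Bool
  | .var _ => true
  | .app u v => !isLamB u && nbB u && nbB v
  | .lam u => nbB u

def freeB : ℕ → Trm → Bool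
  | n, .var m => n == m
  | n, .app u v => freeB n u || freeB n v
  | n, .lam u => freeB (n+1) u

lemma freeB_iff : ∀ (t : Trm) (n : ℕ), freeB n t = true ↔ n ∈ fv t := by
  intro t
  induction t with
  | var m =>
    intro n
    simp only [freeB, beq_iff_eq, Trm.fv_var, Set.mem_singleton_iff]
  | app u v ihu ihv =>
    intro n
    simp [freeB, ihu, ihv]
  | lam u ih =>
    intro n
    simp only [freeB, Trm.mem_fv_lam]
    exact ih (n+1)

def etaRedexB : Trm → Bool
  | .app a (.var 0) => !freeB 0 a
  | _ => false

def neB : Trm → Bool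
  | .var _ => true
  | .app u v => neB u && neB v
  | .lam u => neB u && !etaRedexB u

lemma nbB_sound : ∀ t, nbB t = true → BetaNormal t := by
  intro t
  induction t with
  | var n => intro _ s hs; exact beta_var hs
  | app u v ihu ihv =>
    intro h s hs
    simp only [nbB, Bool.and_eq_true, Bool.not_eq_true'] at h
    rcases beta_app_inv hs with ⟨w, hw, _⟩ | ⟨a', ha', _⟩ | ⟨b', hb', _⟩
    · rw [hw] at h
      simp [isLamB] at h
    · exact ihu h.1.2 _ ha'
    · exact ihv h.2 _ hb'
  | lam u ih =>
    intro h s hs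
    obtain ⟨a', ha', _⟩ := beta_lam_inv hs
    exact ih h _ ha'

lemma neB_sound : ∀ t, neB t = true → ∀ s, ¬ Eta t s := by
  intro t
  induction t with
  | var n => intro _ s hs; exact eta_var hs
  | app u v ihu ihv =>
    intro h s hs
    simp only [neB, Bool.and_eq_true] at h
    rcases eta_app_inv hs with ⟨a', ha', _⟩ | ⟨b', hb', _⟩
    · exact ihu h.1 _ ha'
    · exact ihv h.2 _ hb'
  | lam u ih =>
    intro h s hs
    simp only [neB, Bool.and_eq_true, Bool.not_eq_true'] at h
    rcases eta_lam_inv hs with heq | ⟨a', ha', _⟩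
    · rw [heq] at h
      have : etaRedexB (app (s.lift 0) (var 0)) = true := by
        simp only [etaRedexB, Bool.not_eq_true']
        rw [← Bool.not_eq_true]
        intro hfree
        exact Trm.not_mem_fv_lift s 0 ((freeB_iff _ 0).1 hfree)
      rw [this] at h
      exact Bool.noConfusion h.2
    · exact ih h.1 _ ha'

/-! ### normality of the chain bodies and Tij -/

lemma nbB_var (n : ℕ) : nbB (var n) = true := rfl
lemma nbB_app (u v : Trm) : nbB (app u v) = (!isLamB u && nbB u && nbB v) := rfl
lemma nbB_lam (u : Trm) : nbB (lam u) = nbB u := rfl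
lemma neB_var (n : ℕ) : neB (var n) = true := rfl
lemma neB_app (u v : Trm) : neB (app u v) = (neB u && neB v) := rfl
lemma neB_lam (u : Trm) : neB (lam u) = (neB u && !etaRedexB u) := rfl

lemma nbB_cb (x y z : ℕ) : ∀ n, nbB (chainBody x y z n) = true := by
  intro n
  induction n with
  | zero => rfl
  | succ n ih =>
    show nbB (app (var x) (app (var y) (chainBody x y z n))) = true
    rw [nbB_app, nbB_app, ih, nbB_var, nbB_var]
    rfl

lemma neB_cb (x y z : ℕ) : ∀ n, neB (chainBody x y z n) = true := by
  intro n
  induction n with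
  | zero => rfl
  | succ n ih =>
    show neB (app (var x) (app (var y) (chainBody x y z n))) = true
    rw [neB_app, neB_app, ih, neB_var, neB_var]
    rfl

lemma etaRedexB_cb_succ (x y z n : ℕ) : etaRedexB (chainBody x y z (n+1)) = false := rfl

lemma Tij_betaEtaNormal (i j : ℕ) : BetaEtaNormal (Tij i j) := by
  rw [Tij_eq]
  have hFnb : nbB (Fc i) = true := by
    cases i with
    | zero => rfl
    | succ i => exact nbB_cb 3 2 3 (i+1)
  have hGnb : nbB (Gc j) = true := by
    cases j with
    | zero => rfl
    | succ j => exact nbB_cb 2 3 2 (j+1)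
  have hFne : neB (Fc i) = true := by
    cases i with
    | zero => rfl
    | succ i =>
      show (neB (chainBody 3 2 3 (i+1)) && !etaRedexB (chainBody 3 2 3 (i+1))) = true
      rw [neB_cb, etaRedexB_cb_succ]
      rfl
  have hGne : neB (Gc j) = true := by
    cases j with
    | zero => rfl
    | succ j =>
      show (neB (chainBody 2 3 2 (j+1)) && !etaRedexB (chainBody 2 3 2 (j+1))) = true
      rw [neB_cb, etaRedexB_cb_succ]
      rfl
  have hCeta : etaRedexB (app (app (var 0) (Fc i)) (Gc j)) = false := by
    cases j with
    | zero => rfl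
    | succ j => rfl
  have hisF : isLamB (app (var 0) (Fc i)) = false := rfl
  have hnb : nbB (lam (lam (lam (app (app (var 0) (Fc i)) (Gc j))))) = true := by
    rw [nbB_lam, nbB_lam, nbB_lam, nbB_app, nbB_app, hFnb, hGnb, hisF, nbB_var]
    rfl
  have hne : neB (lam (lam (lam (app (app (var 0) (Fc i)) (Gc j))))) = true := by
    rw [neB_lam, neB_lam, neB_lam, neB_app, neB_app, hFne, hGne, hCeta, neB_var]
    rfl
  intro s
  exact ⟨nbB_sound _ hnb s, neB_sound _ hne s⟩

/-! ### closedness of Tij -/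

lemma fv_cb_subset {x y z k : ℕ} : ∀ n ∈ fv (chainBody x y z k), n = x ∨ n = y ∨ n = z ∨ n = 0 := by
  induction k with
  | zero =>
    intro n hn
    simp only [chainBody, Trm.fv_app, Trm.fv_var, Set.mem_union, Set.mem_singleton_iff] at hn
    tauto
  | succ k ih =>
    intro n hn
    simp only [chainBody, Trm.fv_app, Trm.fv_var, Set.mem_union, Set.mem_singleton_iff] at hn
    rcases hn with h | h | h
    · tauto
    · tauto
    · exact ih n h

lemma Tij_closed (i j : ℕ) : Trm.Closed (Tij i j) := by
  rw [Tij_eq, Trm.Closed]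
  rw [Set.eq_empty_iff_forall_notMem]
  intro n hn
  rw [Trm.mem_fv_lam, Trm.mem_fv_lam, Trm.mem_fv_lam] at hn
  simp only [Trm.fv_app, Trm.fv_var, Set.mem_union, Set.mem_singleton_iff] at hn
  rcases hn with (h | h) | h
  · omega
  · -- n+3 ∈ fv (Fc i)
    cases i with
    | zero => simp only [Fc, Trm.fv_var, Set.mem_singleton_iff] at h; omega
    | succ i =>
      simp only [Fc, Trm.mem_fv_lam] at h
      rcases fv_cb_subset _ h with h' | h' | h' | h' <;> omega
  · cases j with
    | zero => simp only [Gc, Trm.fv_var, Set.mem_singleton_iff] at h; omega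
    | succ j =>
      simp only [Gc, Trm.mem_fv_lam] at h
      rcases fv_cb_subset _ h with h' | h' | h' | h' <;> omega

/-! ### Tij is a λI-term -/

lemma cb_isLI (x y z : ℕ) : ∀ n, Trm.IsLI (chainBody x y z n) := by
  intro n
  induction n with
  | zero => exact Trm.IsLI.app (Trm.IsLI.var z) (Trm.IsLI.var 0)
  | succ n ih => exact Trm.IsLI.app (Trm.IsLI.var x) (Trm.IsLI.app (Trm.IsLI.var y) ih)

lemma cb_fv0 (x y z : ℕ) : ∀ n, (0:ℕ) ∈ fv (chainBody x y z n) := by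
  intro n
  induction n with
  | zero => exact Or.inr rfl
  | succ n ih => exact Or.inr (Or.inr ih)

lemma cb_fv_head (x y : ℕ) : ∀ n, x ∈ fv (chainBody x y x n) := by
  intro n
  cases n with
  | zero => exact Or.inl rfl
  | succ n => exact Or.inl rfl

/-- any term of the classified shape is a λI-term -/
lemma shape_isLI {F G : Trm}
    (hF : F = var 2 ∨ ∃ i, F = lam (chainBody 3 2 3 i))
    (hG : G = var 1 ∨ ∃ j, G = lam (chainBody 2 3 2 j)) :
    Trm.IsLI (lam (lam (lam (app (app (var 0) F) G)))) := by
  have hFLI : Trm.IsLI F := by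
    rcases hF with rfl | ⟨i, rfl⟩
    · exact Trm.IsLI.var 2
    · exact Trm.IsLI.lam (cb_isLI 3 2 3 i) (cb_fv0 3 2 3 i)
  have hGLI : Trm.IsLI G := by
    rcases hG with rfl | ⟨j, rfl⟩
    · exact Trm.IsLI.var 1
    · exact Trm.IsLI.lam (cb_isLI 2 3 2 j) (cb_fv0 2 3 2 j)
  have hF2 : (2:ℕ) ∈ fv F := by
    rcases hF with rfl | ⟨i, rfl⟩
    · rfl
    · rw [Trm.mem_fv_lam]
      exact cb_fv_head 3 2 i
  have hG1 : (1:ℕ) ∈ fv G := by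
    rcases hG with rfl | ⟨j, rfl⟩
    · rfl
    · rw [Trm.mem_fv_lam]
      exact cb_fv_head 2 3 j
  refine Trm.IsLI.lam (Trm.IsLI.lam (Trm.IsLI.lam
    (Trm.IsLI.app (Trm.IsLI.app (Trm.IsLI.var 0) hFLI) hGLI) ?_) ?_) ?_
  · -- 0 ∈ fv body
    exact Or.inl (Or.inl rfl)
  · -- 1 ∈ fv body
    rw [Trm.mem_fv_lam]
    exact Or.inr hG1
  · -- 2 ∈ fv body
    rw [Trm.mem_fv_lam, Trm.mem_fv_lam]
    exact Or.inl (Or.inr hF2)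

/-! ### injectivity of Tij in the first index -/

lemma cb_inj {x y z : ℕ} : ∀ {n n' : ℕ}, chainBody x y z n = chainBody x y z n' → n = n' := by
  intro n
  induction n with
  | zero =>
    intro n' h
    cases n' with
    | zero => rfl
    | succ n' =>
      exfalso
      simp only [chainBody, Trm.app.injEq] at h
      exact Trm.noConfusion h.2
  | succ n ih =>
    intro n' h
    cases n' with
    | zero =>
      exfalso
      simp only [chainBody, Trm.app.injEq] at h
      exact Trm.noConfusion h.2
    | succ n' =>
      simp only [chainBody, Trm.app.injEq] at h
      rw [ih h.2.2]

lemma Tij_inj_left : Function.Injective (fun i => Tij i 0) := by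
  intro i i' h
  simp only [Tij_eq] at h
  simp only [Trm.lam.injEq, Trm.app.injEq] at h
  have hF : Fc i = Fc i' := h.1.2
  cases i with
  | zero =>
    cases i' with
    | zero => rfl
    | succ i' => exact absurd hF (by simp [Fc])
  | succ i =>
    cases i' with
    | zero => exact absurd hF (by simp [Fc])
    | succ i' =>
      simp only [Fc, Trm.lam.injEq] at hF
      rw [cb_inj hF]

/-! ### Binf is a closed type -/

lemma binf_closedTy : Ty.ClosedTy Binf := by
  rw [show Binf = Ty.all (Ty.all (Ty.arr (Ty.arr (.var 1) (.var 0)) (Ty.arr (Ty.arr (.var 0) (.var 1))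
    (Ty.all (Ty.arr (Ty.arr (Ty.arr (.var 2) (.var 1)) (Ty.arr (Ty.arr (.var 1) (.var 2)) (.var 0))) (.var 0)))))) from rfl]
  rw [Ty.ClosedTy, Set.eq_empty_iff_forall_notMem]
  intro n hn
  simp only [Ty.tfv, Set.mem_setOf_eq, Set.mem_union, Set.mem_singleton_iff] at hn
  omega

/-! ### the η-exclusions -/

lemma eta_F0 {G : Trm} :
    Eta (lam (lam (lam (app (app (var 0) (lam (chainBody 3 2 3 0))) G))))
      (lam (lam (lam (app (app (var 0) (var 2)) G)))) :=
  Eta.lam (Eta.lam (Eta.lam (Eta.appL (Eta.appR (Eta.eta (var 2))))))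

lemma eta_G0 {F : Trm} :
    Eta (lam (lam (lam (app (app (var 0) F) (lam (chainBody 2 3 2 0))))))
      (lam (lam (lam (app (app (var 0) F) (var 1))))) :=
  Eta.lam (Eta.lam (Eta.lam (Eta.appR (Eta.eta (var 1)))))

/-! ### the three parts of the statement -/

lemma lam_eq : Lam Binf = {t | ∃ i j : ℕ, t = Tij i j} := by
  ext t
  constructor
  · rintro ⟨hbe, hcl, hty⟩
    have hbn : BetaNormal t := fun u => (hbe u).1
    have hsem := soundness_closed hty hcl (fun _ => Set.univ) (fun _ => sat_univ)
    obtain ⟨F, G, rfl, hF, hG⟩ := classify hcl hbn hsem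
    have hFc : ∃ i, F = Fc i := by
      rcases hF with rfl | ⟨i, rfl⟩
      · exact ⟨0, rfl⟩
      · cases i with
        | zero => exact absurd (eta_F0 (G := G)) (fun h => (hbe _).2 h)
        | succ i => exact ⟨i + 1, rfl⟩
    have hGc : ∃ j, G = Gc j := by
      rcases hG with rfl | ⟨j, rfl⟩
      · exact ⟨0, rfl⟩
      · cases j with
        | zero => exact absurd (eta_G0 (F := F)) (fun h => (hbe _).2 h)
        | succ j => exact ⟨j + 1, rfl⟩
    obtain ⟨i, rfl⟩ := hFc
    obtain ⟨j, rfl⟩ := hGc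
    exact ⟨i, j, (Tij_eq i j).symm⟩
  · rintro ⟨i, j, rfl⟩
    exact ⟨Tij_betaEtaNormal i j, Tij_closed i j, Tij_typing i j⟩

lemma binf_itype : IType Binf := by
  refine ⟨binf_closedTy, ?_⟩
  intro t hbn hcl hty
  have hsem := soundness_closed hty hcl (fun _ => Set.univ) (fun _ => sat_univ)
  obtain ⟨F, G, rfl, hF, hG⟩ := classify hcl hbn hsem
  exact shape_isLI hF hG

lemma binf_infinite : (Lam Binf).Infinite := by
  apply Set.infinite_of_injective_forall_mem (f := fun i => Tij i 0) Tij_inj_left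
  intro i
  exact ⟨Tij_betaEtaNormal i 0, Tij_closed i 0, Tij_typing i 0⟩

/-- B_∞ is an infinite I-type, and Λ(B_∞) = {T_{i,j} : i, j ∈ ℕ}. -/
theorem stmt17 :
    IType Binf ∧ (Lam Binf).Infinite ∧
      Lam Binf = {t | ∃ i j : ℕ, t = Tij i j} := by
  exact ⟨binf_itype, binf_infinite, lam_eq⟩
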